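/- arXiv:2604.06859 — 3 statements merged into one kernel-verified Lean document; each statement's English description precedes it below -/
import Mathlib

section
/- Let M = (S, Act, P) be an MDP with RelReach data (m, n, q₁,…,q_m, q, s₁,…,s_m, k, T₁,…,T_m) and a comparison relation ⋈ ∈ {>, ≥, ≈_ε, ≉_ε} for some rational ε ≥ 0. Write the state-scheduler combinations as 𝒞 = {c₁,…,c_r}. Then there exist schedulers σ₁,…,σₙ for M with Σ_{i=1}^m qᵢ · Pr^{M,σ_{k(i)}}_{sᵢ}(◇Tᵢ) ⋈ q if and only if there exist schedulers τ₁,…,τ_r for M (one per combination) with Σ_{l=1}^r Σ_{j ∈ ind(c_l)} q_j · Pr^{M,τ_l}_{s_j}(◇T_j) ⋈ q. -/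
open scoped Classical
open Filter

noncomputable section

/-- A Markov decision process with state space `S` and action space `A`. -/
structure MDP (S A : Type) where
  P : S → A → S → ℝ
  nonneg : ∀ s a s', 0 ≤ P s a s'
  le_one : ∀ s a s', P s a s' ≤ 1
  exists_enabled : ∀ s : S, ∃ a : A, (∑' s', P s a s') = 1
  zero_of_not_enabled : ∀ (s : S) (a : A), (∑' s', P s a s') ≠ 1 → (∑' s', P s a s') = 0

namespace MDP

variable {S A : Type}

/-- Action `a` is enabled in state `s`. -/
def Enabled (M : MDP S A) (s : S) (a : A) : Prop := (∑' s', M.P s a s') = 1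

/-- `s` is an absorbing state. -/
def AbsorbingState (M : MDP S A) (s : S) : Prop := ∀ a : A, M.Enabled s a → M.P s a s = 1

/-- An absorbing set of states: all its elements are absorbing. -/
def AbsorbingSet (M : MDP S A) (T : Set S) : Prop := ∀ s ∈ T, M.AbsorbingState s

end MDP

/-- A finite path: an initial state together with a list of (action, next state) steps. -/
abbrev FPath (S A : Type) : Type := S × List (A × S)

/-- The last state of a finite path. -/
def fpLast {S A : Type} (p : FPath S A) : S := ((p.2.map Prod.snd).getLast?).getD p.1

/-- Extending a finite path by one step. -/
def fpExt {S A : Type} (p : FPath S A) (a : A) (s' : S) : FPath S A := (p.1, p.2 ++ [(a, s')])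

/-- A (history-dependent, randomized) scheduler for the MDP `M`. -/
structure Scheduler {S A : Type} (M : MDP S A) where
  act : FPath S A → A → ℝ
  nonneg : ∀ p a, 0 ≤ act p a
  sum_one : ∀ p, (∑' a, act p a) = 1
  not_enabled : ∀ p a, ¬ M.Enabled (fpLast p) a → act p a = 0

namespace Scheduler

variable {S A : Type} {M : MDP S A}

/-- A memoryless scheduler depends only on the last state of the path. -/
def Memoryless (σ : Scheduler M) : Prop :=
  ∀ p : FPath S A, σ.act p = σ.act (fpLast p, ([] : List (A × S)))

/-- A deterministic scheduler chooses a Dirac distribution on every path. -/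
def Deterministic (σ : Scheduler M) : Prop := ∀ p : FPath S A, ∃ a : A, σ.act p a = 1

/-- A memoryless deterministic (MD) scheduler. -/
def MD (σ : Scheduler M) : Prop := σ.Memoryless ∧ σ.Deterministic

end Scheduler

/-- One-step expectation operator: expected value of `g` after one step from `p`. -/
def stepExp {S A : Type} (M : MDP S A) (σ : Scheduler M) (p : FPath S A)
    (g : FPath S A → ℝ) : ℝ :=
  ∑' a : A, ∑' s' : S, σ.act p a * M.P (fpLast p) a s' * g (fpExt p a s')

/-- Probability of visiting `T` within `n` further steps, continuing the finite path `p`. -/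
def reachN {S A : Type} (M : MDP S A) (σ : Scheduler M) (T : Set S) :
    ℕ → FPath S A → ℝ
  | 0, p => if fpLast p ∈ T then 1 else 0
  | n + 1, p => if fpLast p ∈ T then 1 else stepExp M σ p (reachN M σ T n)

/-- Reachability probability `Pr^{M,σ}_s(◇T)`. -/
def reachProb {S A : Type} (M : MDP S A) (σ : Scheduler M) (s : S) (T : Set S) : ℝ :=
  ⨆ n : ℕ, reachN M σ T n (s, [])

/-- Probability of visiting `T` at some time `≥ j` within `j + n` steps, from path `p`. -/
def reachAfterN {S A : Type} (M : MDP S A) (σ : Scheduler M) (T : Set S) :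
    ℕ → ℕ → FPath S A → ℝ
  | 0, n, p => reachN M σ T n p
  | j + 1, n, p => stepExp M σ p (fun p' => reachAfterN M σ T j n p')

/-- Büchi probability `Pr^{M,σ}_s(□◇T)`: the probability of visiting `T` infinitely often. -/
def buchiProb {S A : Type} (M : MDP S A) (σ : Scheduler M) (s : S) (T : Set S) : ℝ :=
  ⨅ j : ℕ, ⨆ n : ℕ, reachAfterN M σ T j n (s, [])

/-- Expected sum of the rewards of the first `n+1` states (counting the current one). -/
def expRewN {S A : Type} (M : MDP S A) (σ : Scheduler M) (R : S → ℝ) :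
    ℕ → FPath S A → ℝ
  | 0, p => R (fpLast p)
  | n + 1, p => R (fpLast p) + stepExp M σ p (fun p' => expRewN M σ R n p')

/-- Expected total reward `E^{M,σ}_s(R)`. -/
def expTotalReward {S A : Type} (M : MDP S A) (σ : Scheduler M) (R : S → ℝ) (s : S) : ℝ :=
  limUnder atTop (fun n => expRewN M σ R n (s, []))

end
/-- The comparison relations `>`, `≥`, `≈_ε`, `≉_ε` (for rational `ε ≥ 0`). -/
def IsCmp (cmp : ℝ → ℝ → Prop) : Prop :=
  cmp = (· > ·) ∨ cmp = (· ≥ ·) ∨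
    (∃ ε : ℚ, 0 ≤ ε ∧ cmp = fun x y => |x - y| ≤ (ε : ℝ)) ∨
    (∃ ε : ℚ, 0 ≤ ε ∧ cmp = fun x y => |x - y| > (ε : ℝ))

/-- The comparison relations `>`, `≥`, `≉_ε` (for rational `ε ≥ 0`). -/
def IsCmpNoEq (cmp : ℝ → ℝ → Prop) : Prop :=
  cmp = (· > ·) ∨ cmp = (· ≥ ·) ∨
    (∃ ε : ℚ, 0 ≤ ε ∧ cmp = fun x y => |x - y| > (ε : ℝ))

/-- Combine a family of schedulers, one per initial state, into one scheduler that
consults the initial state of the path. -/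
noncomputable def combineSched {S A : Type} {M : MDP S A} (τ : S → Scheduler M) :
    Scheduler M where
  act p := (τ p.1).act p
  nonneg p a := (τ p.1).nonneg p a
  sum_one p := (τ p.1).sum_one p
  not_enabled p a h := (τ p.1).not_enabled p a h

theorem reachN_combineSched {S A : Type} {M : MDP S A} (τ : S → Scheduler M)
    (T : Set S) : ∀ (n : ℕ) (p : FPath S A),
    reachN M (combineSched τ) T n p = reachN M (τ p.1) T n p := by
  intro n
  induction n with
  | zero => intro p; rfl
  | succ n ih =>
    intro p
    simp only [reachN, stepExp]
    congr 1
    apply tsum_congr; intro a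
    apply tsum_congr; intro s'
    have h1 : (combineSched τ).act p = (τ p.1).act p := rfl
    have h2 : (fpExt p a s').1 = p.1 := rfl
    rw [h1, ih (fpExt p a s'), h2]

theorem reachProb_combineSched {S A : Type} {M : MDP S A} (τ : S → Scheduler M)
    (s : S) (T : Set S) :
    reachProb M (combineSched τ) s T = reachProb M (τ s) s T := by
  unfold reachProb
  congr 1
  funext n
  exact reachN_combineSched τ T n (s, [])

theorem relReach_state_scheduler_combinations
    {S A : Type} [Finite S] [Nonempty S] [Finite A] [Nonempty A]
    (M : MDP S A) (m n : ℕ) (hm : 1 ≤ m)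
    (qc : Fin m → ℚ) (q : ℚ) (st : Fin m → S)
    (k : Fin m → Fin n) (hk : Function.Surjective k)
    (T : Fin m → Set S)
    (cmp : ℝ → ℝ → Prop) (hcmp : IsCmp cmp) :
    (∃ σ : Fin n → Scheduler M,
        cmp (∑ i : Fin m, (qc i : ℝ) * reachProb M (σ (k i)) (st i) (T i)) (q : ℝ)) ↔
    (∃ τ : S × Fin n → Scheduler M,
        cmp (∑ i : Fin m, (qc i : ℝ) * reachProb M (τ (st i, k i)) (st i) (T i)) (q : ℝ)) := by
  constructor
  · rintro ⟨σ, hσ⟩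
    exact ⟨fun c => σ c.2, hσ⟩
  · rintro ⟨τ, hτ⟩
    refine ⟨fun j => combineSched (fun s => τ (s, j)), ?_⟩
    have : ∀ i : Fin m,
        reachProb M (combineSched (fun s => τ (s, k i))) (st i) (T i)
          = reachProb M (τ (st i, k i)) (st i) (T i) := fun i =>
      reachProb_combineSched (fun s => τ (s, k i)) (st i) (T i)
    simpa only [this] using hτ
end

section
/- Let M = (S, Act, P) be an MDP, s ∈ S, J a nonempty finite index set, (q_j)_{j∈J} rational coefficients and (T_j)_{j∈J} target sets. Let 𝒯 = {T_j | j ∈ J}, let M_𝒯 be the goal unfolding of M w.r.t. 𝒯, and let R be the reward structure on M_𝒯 given by the coefficients q_T = Σ_{j ∈ J : T_j = T} q_j (T ∈ 𝒯). Then the supremum over all schedulers σ of M of Σ_{j∈J} q_j · Pr^{M,σ}_s(◇T_j) equals the supremum over all schedulers τ of M_𝒯 of E^{M_𝒯,τ}_{(s,∅)}(R), and the analogous identity holds with infima in place of suprema. -/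
open scoped Classical
open Filter

/-- `Mu` is the goal unfolding of `M` with respect to the family `𝒯` of target sets. -/
def IsGoalUnfolding {S A : Type} (M : MDP S A) (𝒯 : Set (Set S))
    (Mu : MDP (S × Set (Set S)) A) : Prop :=
  ∀ (s : S) (U : Set (Set S)) (a : A) (s' : S) (U' : Set (Set S)),
    Mu.P (s, U) a (s', U') =
      if U' = U ∪ {T' ∈ 𝒯 | s ∈ T'} then M.P s a s' else 0

/-- The reward structure on the goal unfolding associated with coefficients `(q_T)_{T ∈ 𝒯}`:
`R(s,𝒰) = Σ_{T ∈ 𝒯 : s ∈ T, T ∉ 𝒰} q_T`. -/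
noncomputable def unfoldReward {S : Type} (𝒯 : Set (Set S)) (qT : Set S → ℚ) :
    S × Set (Set S) → ℝ :=
  fun x => ∑' T' : {T' : Set S // T' ∈ 𝒯 ∧ x.1 ∈ T' ∧ T' ∉ x.2}, (qT T'.1 : ℝ)

/-- The reward structure on the goal unfolding induced by an indexed family of targets
`(T_j)_{j ∈ J}` with coefficients `(q_j)_{j ∈ J}`, where `q_T = Σ_{j : T_j = T} q_j`:
`R(s,𝒰) = Σ_{T ∈ range T_ : s ∈ T, T ∉ 𝒰} Σ_{j : T_j = T} q_j`. -/
noncomputable def unfoldRewardIdx {S J : Type} (Tf : J → Set S) (qf : J → ℚ) :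
    S × Set (Set S) → ℝ :=
  fun x => ∑' T' : {T' : Set S // T' ∈ Set.range Tf ∧ x.1 ∈ T' ∧ T' ∉ x.2},
    ∑' j : {j : J // Tf j = T'.1}, (qf j.1 : ℝ)

noncomputable section Aux2

section Aux
variable {S A : Type}

/-- default scheduler -/
def defaultSched (M : MDP S A) : Scheduler M where
  act p a := if a = Classical.choose (M.exists_enabled (fpLast p)) then 1 else 0
  nonneg p a := by split <;> norm_num
  sum_one p := tsum_ite_eq _ 1
  not_enabled p a h := by
    split
    · exact absurd (by rw [‹a = _›]; exact Classical.choose_spec (M.exists_enabled (fpLast p))) h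
    · rfl

instance (M : MDP S A) : Nonempty (Scheduler M) := ⟨defaultSched M⟩

lemma fpLast_fpExt (p : FPath S A) (a : A) (s' : S) : fpLast (fpExt p a s') = s' := by
  simp [fpLast, fpExt]

/-- recursive last state -/
def lastSt : S → List (A × S) → S
  | s, [] => s
  | _, (_, s') :: l => lastSt s' l

lemma lastSt_eq_of_ne_nil {l : List (A × S)} (h : l ≠ []) (s t : S) :
    lastSt s l = lastSt t l := by
  cases l with
  | nil => exact absurd rfl h
  | cons x l => rfl

lemma fpLast_eq_lastSt (p : FPath S A) : fpLast p = lastSt p.1 p.2 := by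
  obtain ⟨s, l⟩ := p
  induction l generalizing s with
  | nil => rfl
  | cons x l ih =>
    obtain ⟨a, s'⟩ := x
    show fpLast (s, (a, s') :: l) = lastSt s' l
    rw [← ih s']
    cases l with
    | nil => rfl
    | cons y l =>
      obtain ⟨z, hz⟩ : ∃ z, ((y.2 :: List.map Prod.snd l)).getLast? = some z :=
        Option.ne_none_iff_exists'.mp (by simp [List.getLast?_eq_none_iff])
      simp only [fpLast, List.map_cons, List.getLast?_cons_cons, hz, Option.getD_some]

lemma lastSt_append_singleton (s : S) (l : List (A × S)) (a : A) (s' : S) :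
    lastSt s (l ++ [(a, s')]) = s' := by
  induction l generalizing s with
  | nil => rfl
  | cons x l ih => exact ih x.2

section Fin
variable [Fintype S] [Fintype A]

lemma stepExp_eq (M : MDP S A) (σ : Scheduler M) (p : FPath S A) (g : FPath S A → ℝ) :
    stepExp M σ p g
      = ∑ a : A, ∑ s' : S, σ.act p a * M.P (fpLast p) a s' * g (fpExt p a s') := by
  rw [stepExp, tsum_fintype]
  exact Finset.sum_congr rfl fun a _ => tsum_fintype _

lemma sum_P (M : MDP S A) (s : S) (a : A) :
    (∑ s' : S, M.P s a s') = if M.Enabled s a then 1 else 0 := by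
  rw [← tsum_fintype (L := SummationFilter.unconditional _)]
  by_cases h : M.Enabled s a
  · rw [if_pos h]; exact h
  · rw [if_neg h]; exact M.zero_of_not_enabled s a h

lemma act_sum (M : MDP S A) (σ : Scheduler M) (p : FPath S A) :
    (∑ a : A, σ.act p a) = 1 := by
  rw [← tsum_fintype (L := SummationFilter.unconditional _)]; exact σ.sum_one p

lemma stepExp_nonneg (M : MDP S A) (σ : Scheduler M) (p : FPath S A) {g : FPath S A → ℝ}
    (hg : ∀ q, 0 ≤ g q) : 0 ≤ stepExp M σ p g := by
  rw [stepExp_eq]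
  refine Finset.sum_nonneg fun a _ => Finset.sum_nonneg fun s' _ => ?_
  exact mul_nonneg (mul_nonneg (σ.nonneg p a) (M.nonneg _ a s')) (hg _)

lemma stepExp_mono (M : MDP S A) (σ : Scheduler M) (p : FPath S A) {g g' : FPath S A → ℝ}
    (h : ∀ q, g q ≤ g' q) : stepExp M σ p g ≤ stepExp M σ p g' := by
  rw [stepExp_eq, stepExp_eq]
  refine Finset.sum_le_sum fun a _ => Finset.sum_le_sum fun s' _ => ?_
  exact mul_le_mul_of_nonneg_left (h _) (mul_nonneg (σ.nonneg p a) (M.nonneg _ a s'))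

lemma stepExp_le_one (M : MDP S A) (σ : Scheduler M) (p : FPath S A) {g : FPath S A → ℝ}
    (hg : ∀ q, g q ≤ 1) (hg0 : ∀ q, 0 ≤ g q) : stepExp M σ p g ≤ 1 := by
  rw [stepExp_eq]
  calc ∑ a : A, ∑ s' : S, σ.act p a * M.P (fpLast p) a s' * g (fpExt p a s')
      ≤ ∑ a : A, ∑ s' : S, σ.act p a * M.P (fpLast p) a s' := by
        refine Finset.sum_le_sum fun a _ => Finset.sum_le_sum fun s' _ => ?_
        have h0 : 0 ≤ σ.act p a * M.P (fpLast p) a s' :=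
          mul_nonneg (σ.nonneg p a) (M.nonneg _ a s')
        calc σ.act p a * M.P (fpLast p) a s' * g (fpExt p a s')
            ≤ σ.act p a * M.P (fpLast p) a s' * 1 :=
              mul_le_mul_of_nonneg_left (hg _) h0
          _ = _ := mul_one _
    _ = ∑ a : A, σ.act p a * ∑ s' : S, M.P (fpLast p) a s' := by
        simp [Finset.mul_sum]
    _ ≤ ∑ a : A, σ.act p a := by
        refine Finset.sum_le_sum fun a _ => ?_
        rw [sum_P]
        split
        · rw [mul_one]
        · rw [mul_zero]; exact σ.nonneg p a
    _ = 1 := act_sum M σ p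

lemma reachN_nonneg (M : MDP S A) (σ : Scheduler M) (T : Set S) :
    ∀ (n : ℕ) (p : FPath S A), 0 ≤ reachN M σ T n p
  | 0, p => by rw [reachN]; split <;> norm_num
  | n + 1, p => by
      rw [reachN]; split
      · norm_num
      · exact stepExp_nonneg M σ p (reachN_nonneg M σ T n)

lemma reachN_le_one (M : MDP S A) (σ : Scheduler M) (T : Set S) :
    ∀ (n : ℕ) (p : FPath S A), reachN M σ T n p ≤ 1
  | 0, p => by rw [reachN]; split <;> norm_num
  | n + 1, p => by
      rw [reachN]; split
      · norm_num
      · exact stepExp_le_one M σ p (reachN_le_one M σ T n) (reachN_nonneg M σ T n)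

lemma reachN_mono (M : MDP S A) (σ : Scheduler M) (T : Set S) :
    ∀ (n : ℕ) (p : FPath S A), reachN M σ T n p ≤ reachN M σ T (n + 1) p
  | 0, p => by
      rw [reachN, reachN]; split
      · norm_num
      · exact stepExp_nonneg M σ p (reachN_nonneg M σ T 0)
  | n + 1, p => by
      rw [reachN, reachN]; split
      · norm_num
      · exact stepExp_mono M σ p (reachN_mono M σ T n)

lemma reachN_tendsto (M : MDP S A) (σ : Scheduler M) (T : Set S) (s : S) :
    Tendsto (fun n => reachN M σ T n (s, [])) atTop (nhds (reachProb M σ s T)) := by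
  refine tendsto_atTop_ciSup (monotone_nat_of_le_succ fun n => reachN_mono M σ T n _) ?_
  exact ⟨1, by rintro x ⟨n, rfl⟩; exact reachN_le_one M σ T n _⟩

lemma reachProb_nonneg (M : MDP S A) (σ : Scheduler M) (s : S) (T : Set S) :
    0 ≤ reachProb M σ s T := by
  refine le_trans (reachN_nonneg M σ T 0 (s, []))
    (le_ciSup (f := fun n => reachN M σ T n (s, [])) ⟨1, ?_⟩ 0)
  rintro x ⟨n, rfl⟩; exact reachN_le_one M σ T n _

lemma reachProb_le_one (M : MDP S A) (σ : Scheduler M) (s : S) (T : Set S) :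
    reachProb M σ s T ≤ 1 :=
  ciSup_le fun n => reachN_le_one M σ T n _


end Fin
end Aux
end Aux2

noncomputable section AuxU
variable {S A : Type}

def Unext (𝒯 : Set (Set S)) (t : S) (U : Set (Set S)) : Set (Set S) :=
  U ∪ {T' ∈ 𝒯 | t ∈ T'}

def liftL (𝒯 : Set (Set S)) : S → Set (Set S) → List (A × S) → List (A × (S × Set (Set S)))
  | _, _, [] => []
  | s, U, (a, s') :: l => (a, (s', Unext 𝒯 s U)) :: liftL 𝒯 s' (Unext 𝒯 s U) l

def Uafter (𝒯 : Set (Set S)) : S → Set (Set S) → List (A × S) → Set (Set S)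
  | _, U, [] => U
  | s, U, (_, s') :: l => Uafter 𝒯 s' (Unext 𝒯 s U) l

def liftP (𝒯 : Set (Set S)) (p : FPath S A) : FPath (S × Set (Set S)) A :=
  ((p.1, ∅), liftL 𝒯 p.1 ∅ p.2)

def projP (q : FPath (S × Set (Set S)) A) : FPath S A :=
  (q.1.1, q.2.map fun x => (x.1, x.2.1))

lemma liftL_concat (𝒯 : Set (Set S)) (l : List (A × S)) :
    ∀ (s : S) (U : Set (Set S)) (a : A) (s' : S),
      liftL 𝒯 s U (l ++ [(a, s')])
        = liftL 𝒯 s U l ++ [(a, (s', Unext 𝒯 (lastSt s l) (Uafter 𝒯 s U l)))] := by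
  induction l with
  | nil => intro s U a s'; rfl
  | cons x l ih =>
    intro s U a s'
    obtain ⟨b, t⟩ := x
    simp only [List.cons_append, liftL, List.append_eq, ih t (Unext 𝒯 s U) a s', lastSt, Uafter]

lemma Uafter_concat (𝒯 : Set (Set S)) (l : List (A × S)) :
    ∀ (s : S) (U : Set (Set S)) (a : A) (s' : S),
      Uafter 𝒯 s U (l ++ [(a, s')]) = Unext 𝒯 (lastSt s l) (Uafter 𝒯 s U l) := by
  induction l with
  | nil => intro s U a s'; rfl
  | cons x l ih =>
    intro s U a s'
    obtain ⟨b, t⟩ := x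
    simp only [List.cons_append, Uafter, List.append_eq, ih t (Unext 𝒯 s U) a s', lastSt]

lemma lastSt_liftL (𝒯 : Set (Set S)) (l : List (A × S)) :
    ∀ (s : S) (U : Set (Set S)),
      lastSt (s, U) (liftL 𝒯 s U l) = (lastSt s l, Uafter 𝒯 s U l) := by
  induction l with
  | nil => intro s U; rfl
  | cons x l ih =>
    intro s U
    obtain ⟨a, s'⟩ := x
    simp only [liftL, lastSt, Uafter, ih s' (Unext 𝒯 s U)]

lemma fpLast_liftP (𝒯 : Set (Set S)) (p : FPath S A) :
    fpLast (liftP 𝒯 p) = (fpLast p, Uafter 𝒯 p.1 ∅ p.2) := by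
  rw [fpLast_eq_lastSt, fpLast_eq_lastSt]
  exact lastSt_liftL 𝒯 p.2 p.1 ∅

lemma liftP_fpExt (𝒯 : Set (Set S)) (p : FPath S A) (a : A) (s' : S) :
    liftP 𝒯 (fpExt p a s')
      = fpExt (liftP 𝒯 p) a (s', Unext 𝒯 (fpLast p) (Uafter 𝒯 p.1 ∅ p.2)) := by
  simp only [liftP, fpExt, liftL_concat, fpLast_eq_lastSt]

lemma Uafter_fpExt (𝒯 : Set (Set S)) (p : FPath S A) (a : A) (s' : S) :
    Uafter 𝒯 (fpExt p a s').1 ∅ (fpExt p a s').2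
      = Unext 𝒯 (fpLast p) (Uafter 𝒯 p.1 ∅ p.2) := by
  simp only [fpExt, Uafter_concat, fpLast_eq_lastSt]

lemma projL (𝒯 : Set (Set S)) (l : List (A × S)) :
    ∀ (s : S) (U : Set (Set S)),
      (liftL 𝒯 s U l).map (fun x => (x.1, x.2.1)) = l := by
  induction l with
  | nil => intro s U; rfl
  | cons x l ih =>
    intro s U
    obtain ⟨a, s'⟩ := x
    simp only [liftL, List.map_cons, ih s' (Unext 𝒯 s U)]

lemma projP_liftP (𝒯 : Set (Set S)) (p : FPath S A) : projP (liftP 𝒯 p) = p := by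
  obtain ⟨s, l⟩ := p
  simp only [projP, liftP, projL]

lemma lastSt_proj (q1 : S × Set (Set S)) (l : List (A × (S × Set (Set S)))) :
    lastSt q1.1 (l.map (fun x => (x.1, x.2.1))) = (lastSt q1 l).1 := by
  induction l generalizing q1 with
  | nil => rfl
  | cons x l ih => simp only [List.map_cons, lastSt, ih x.2]

lemma fpLast_projP (q : FPath (S × Set (Set S)) A) :
    fpLast (projP q) = (fpLast q).1 := by
  rw [fpLast_eq_lastSt, fpLast_eq_lastSt]
  exact lastSt_proj q.1 q.2

section FinU
variable [Fintype S] [Fintype A]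

lemma hMuP {M : MDP S A} {𝒯 : Set (Set S)} {Mu : MDP (S × Set (Set S)) A}
    (hMu : IsGoalUnfolding M 𝒯 Mu) (t : S) (U : Set (Set S)) (a : A) (s' : S)
    (U' : Set (Set S)) :
    Mu.P (t, U) a (s', U') = if U' = Unext 𝒯 t U then M.P t a s' else 0 :=
  hMu t U a s' U'

lemma enabled_iff {M : MDP S A} {𝒯 : Set (Set S)} {Mu : MDP (S × Set (Set S)) A}
    (hMu : IsGoalUnfolding M 𝒯 Mu) (t : S) (U : Set (Set S)) (a : A) :
    Mu.Enabled (t, U) a ↔ M.Enabled t a := by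
  have h : (∑' x : S × Set (Set S), Mu.P (t, U) a x) = ∑' s' : S, M.P t a s' := by
    rw [tsum_fintype, tsum_fintype, Fintype.sum_prod_type]
    refine Finset.sum_congr rfl fun s' _ => ?_
    simp only [hMuP hMu]
    simp [Finset.sum_ite_eq']
  rw [MDP.Enabled, MDP.Enabled, h]

end FinU
end AuxU

noncomputable section AuxK
variable {S A J : Type}

section FinK
variable [Fintype S] [Fintype A] [Fintype J]

lemma tsum_subtype_eq_sum_ite {β : Type} [Fintype β] (P : β → Prop) (f : β → ℝ) :
    (∑' x : {b : β // P b}, f x.1) = ∑ b : β, if P b then f b else 0 := by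
  rw [tsum_fintype, ← Finset.sum_filter]
  exact (Finset.sum_subtype _ (by simp) f).symm

omit [Fintype A] in
lemma unfoldRewardIdx_eq (Tf : J → Set S) (qf : J → ℚ) (x : S × Set (Set S)) :
    unfoldRewardIdx Tf qf x
      = ∑ j : J, if x.1 ∈ Tf j ∧ Tf j ∉ x.2 then (qf j : ℝ) else 0 := by
  have hinner : ∀ T' : Set S, (∑' j : {j : J // Tf j = T'}, (qf j.1 : ℝ))
      = ∑ j : J, if Tf j = T' then (qf j : ℝ) else 0 :=
    fun T' => tsum_subtype_eq_sum_ite (fun j => Tf j = T') (fun j => (qf j : ℝ))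
  have houter := tsum_subtype_eq_sum_ite
    (fun T' : Set S => T' ∈ Set.range Tf ∧ x.1 ∈ T' ∧ T' ∉ x.2)
    (fun T' => ∑' j : {j : J // Tf j = T'}, (qf j.1 : ℝ))
  unfold unfoldRewardIdx
  rw [houter]
  trans (∑ b : Set S, ∑ j : J,
    if b ∈ Set.range Tf ∧ x.1 ∈ b ∧ b ∉ x.2
    then (if Tf j = b then (qf j : ℝ) else 0) else 0)
  · exact Finset.sum_congr rfl fun b _ => by
      rw [hinner]
      by_cases h : b ∈ Set.range Tf ∧ x.1 ∈ b ∧ b ∉ x.2 <;> simp [h, hinner]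
  · rw [Finset.sum_comm]
    refine Finset.sum_congr rfl fun j _ => ?_
    rw [Finset.sum_eq_single_of_mem (Tf j) (Finset.mem_univ _)
      (fun b _ hb => by simp [Ne.symm hb])]
    simp

lemma myCollapse {β : Type} [Fintype β] (c : β) (f : β → ℝ) :
    (∑ b : β, if b = c then f b else 0) = f c := by
  rw [Finset.sum_eq_single_of_mem c (Finset.mem_univ _) (fun b _ hb => by simp [hb])]
  simp

lemma key_exp (M : MDP S A) (Mu : MDP (S × Set (Set S)) A) (Tf : J → Set S) (qf : J → ℚ)
    (hMu : IsGoalUnfolding M (Set.range Tf) Mu)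
    (σ : Scheduler M) (τ : Scheduler Mu)
    (hστ : ∀ p : FPath S A, τ.act (liftP (Set.range Tf) p) = σ.act p) :
    ∀ (n : ℕ) (p : FPath S A),
      expRewN Mu τ (unfoldRewardIdx Tf qf) n (liftP (Set.range Tf) p)
        = ∑ j : J, if Tf j ∉ Uafter (Set.range Tf) p.1 ∅ p.2
            then (qf j : ℝ) * reachN M σ (Tf j) n p else 0 := by
  intro n
  induction n with
  | zero =>
    intro p
    simp only [expRewN]
    rw [fpLast_liftP, unfoldRewardIdx_eq]
    refine Finset.sum_congr rfl fun j _ => ?_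
    simp only [reachN]
    by_cases h1 : fpLast p ∈ Tf j <;>
      by_cases h2 : Tf j ∈ Uafter (Set.range Tf) p.1 ∅ p.2 <;>
      simp [h1, h2]
  | succ n ih =>
    intro p
    simp only [expRewN]
    rw [stepExp_eq, fpLast_liftP, unfoldRewardIdx_eq]
    simp only [Fintype.sum_prod_type]
    simp only [hMuP hMu]
    simp only [mul_ite, ite_mul, mul_zero, zero_mul]
    simp only [Finset.sum_ite_eq, Finset.sum_ite_eq', Finset.mem_univ, if_true]
    simp only [← liftP_fpExt]
    simp only [ih]
    simp only [Uafter_fpExt]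
    simp only [hστ]
    have hswap : ∀ (a : A) (s' : S), σ.act p a * M.P (fpLast p) a s' *
        (∑ j : J,
          if Tf j ∉ Unext (Set.range Tf) (fpLast p) (Uafter (Set.range Tf) p.1 ∅ p.2)
          then (qf j : ℝ) * reachN M σ (Tf j) n (fpExt p a s') else 0)
        = ∑ j : J,
          if Tf j ∉ Unext (Set.range Tf) (fpLast p) (Uafter (Set.range Tf) p.1 ∅ p.2)
          then (qf j : ℝ) *
            (σ.act p a * M.P (fpLast p) a s' * reachN M σ (Tf j) n (fpExt p a s')) else 0 := by
      intro a s'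
      rw [Finset.mul_sum]
      refine Finset.sum_congr rfl fun j _ => ?_
      by_cases hc : Tf j ∉ Unext (Set.range Tf) (fpLast p) (Uafter (Set.range Tf) p.1 ∅ p.2) <;>
        simp [hc] <;> ring
    simp only [hswap]
    have hcomm : ∀ a : A, (∑ s' : S, ∑ j : J,
          if Tf j ∉ Unext (Set.range Tf) (fpLast p) (Uafter (Set.range Tf) p.1 ∅ p.2)
          then (qf j : ℝ) *
            (σ.act p a * M.P (fpLast p) a s' * reachN M σ (Tf j) n (fpExt p a s')) else 0)
        = ∑ j : J, ∑ s' : S,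
          if Tf j ∉ Unext (Set.range Tf) (fpLast p) (Uafter (Set.range Tf) p.1 ∅ p.2)
          then (qf j : ℝ) *
            (σ.act p a * M.P (fpLast p) a s' * reachN M σ (Tf j) n (fpExt p a s')) else 0 :=
      fun a => Finset.sum_comm
    simp only [hcomm]
    rw [Finset.sum_comm]
    have hstep : ∀ j : J, (∑ a : A, ∑ s' : S,
          if Tf j ∉ Unext (Set.range Tf) (fpLast p) (Uafter (Set.range Tf) p.1 ∅ p.2)
          then (qf j : ℝ) *
            (σ.act p a * M.P (fpLast p) a s' * reachN M σ (Tf j) n (fpExt p a s')) else 0)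
        = if Tf j ∉ Unext (Set.range Tf) (fpLast p) (Uafter (Set.range Tf) p.1 ∅ p.2)
          then (qf j : ℝ) * stepExp M σ p (reachN M σ (Tf j) n) else 0 := by
      intro j
      by_cases hc : Tf j ∉ Unext (Set.range Tf) (fpLast p) (Uafter (Set.range Tf) p.1 ∅ p.2)
      · simp only [if_pos hc]
        rw [stepExp_eq, Finset.mul_sum]
        refine Finset.sum_congr rfl fun a _ => ?_
        rw [Finset.mul_sum]
      · simp [hc]
    simp only [hstep]
    rw [← Finset.sum_add_distrib]
    refine Finset.sum_congr rfl fun j _ => ?_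
    simp only [reachN]
    have hU1 : Tf j ∈ Unext (Set.range Tf) (fpLast p) (Uafter (Set.range Tf) p.1 ∅ p.2)
        ↔ Tf j ∈ Uafter (Set.range Tf) p.1 ∅ p.2 ∨ fpLast p ∈ Tf j := by
      simp [Unext]
    by_cases h1 : Tf j ∈ Uafter (Set.range Tf) p.1 ∅ p.2 <;>
      by_cases h2 : fpLast p ∈ Tf j <;>
      simp [h1, h2, hU1]

lemma value_eq (M : MDP S A) (Mu : MDP (S × Set (Set S)) A) (Tf : J → Set S) (qf : J → ℚ)
    (hMu : IsGoalUnfolding M (Set.range Tf) Mu)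
    (σ : Scheduler M) (τ : Scheduler Mu)
    (hστ : ∀ p : FPath S A, τ.act (liftP (Set.range Tf) p) = σ.act p) (s : S) :
    expTotalReward Mu τ (unfoldRewardIdx Tf qf) (s, (∅ : Set (Set S)))
      = ∑' j : J, (qf j : ℝ) * reachProb M σ s (Tf j) := by
  have h0 : ∀ n : ℕ, expRewN Mu τ (unfoldRewardIdx Tf qf) n ((s, (∅ : Set (Set S))), [])
      = ∑ j : J, (qf j : ℝ) * reachN M σ (Tf j) n (s, []) := by
    intro n
    rw [show ((s, (∅ : Set (Set S))), ([] : List (A × (S × Set (Set S)))))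
        = liftP (Set.range Tf) ((s, []) : FPath S A) from rfl,
      key_exp M Mu Tf qf hMu σ τ hστ n (s, [])]
    refine Finset.sum_congr rfl fun j _ => ?_
    exact if_pos (Set.notMem_empty (Tf j))
  have htend : Tendsto (fun n : ℕ => ∑ j : J, (qf j : ℝ) * reachN M σ (Tf j) n (s, []))
      atTop (nhds (∑ j : J, (qf j : ℝ) * reachProb M σ s (Tf j))) :=
    tendsto_finset_sum _ fun j _ => (reachN_tendsto M σ (Tf j) s).const_mul _
  rw [tsum_fintype, expTotalReward]
  exact (htend.congr fun n => (h0 n).symm).limUnder_eq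

def upSched {M : MDP S A} {𝒯 : Set (Set S)} {Mu : MDP (S × Set (Set S)) A}
    (hMu : IsGoalUnfolding M 𝒯 Mu) (σ : Scheduler M) : Scheduler Mu where
  act q := σ.act (projP q)
  nonneg q a := σ.nonneg _ a
  sum_one q := σ.sum_one _
  not_enabled q a h := by
    refine σ.not_enabled _ a ?_
    rw [fpLast_projP]
    intro hE
    exact h (by
      have := (enabled_iff hMu (fpLast q).1 (fpLast q).2 a).mpr hE
      rwa [Prod.mk.eta] at this)

def downSched {M : MDP S A} {𝒯 : Set (Set S)} {Mu : MDP (S × Set (Set S)) A}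
    (hMu : IsGoalUnfolding M 𝒯 Mu) (τ : Scheduler Mu) : Scheduler M where
  act p := τ.act (liftP 𝒯 p)
  nonneg p a := τ.nonneg _ a
  sum_one p := τ.sum_one _
  not_enabled p a h := by
    refine τ.not_enabled _ a ?_
    rw [fpLast_liftP]
    exact fun hE => h ((enabled_iff hMu _ _ a).mp hE)

lemma upSched_act {M : MDP S A} {𝒯 : Set (Set S)} {Mu : MDP (S × Set (Set S)) A}
    (hMu : IsGoalUnfolding M 𝒯 Mu) (σ : Scheduler M) (p : FPath S A) :
    (upSched hMu σ).act (liftP 𝒯 p) = σ.act p := by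
  show σ.act (projP (liftP 𝒯 p)) = σ.act p
  rw [projP_liftP]

end FinK
end AuxK


theorem weighted_reach_as_expected_reward_on_goal_unfolding
    {S A : Type} [Finite S] [Nonempty S] [Finite A] [Nonempty A]
    {J : Type} [Finite J] [Nonempty J]
    (M : MDP S A) (s : S) (qf : J → ℚ) (Tf : J → Set S)
    (Mu : MDP (S × Set (Set S)) A)
    (hMu : IsGoalUnfolding M (Set.range Tf) Mu) :
    (⨆ σ : Scheduler M, ∑' j : J, (qf j : ℝ) * reachProb M σ s (Tf j)) =
      (⨆ τ : Scheduler Mu,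
        expTotalReward Mu τ (unfoldRewardIdx Tf qf) (s, (∅ : Set (Set S)))) ∧
    (⨅ σ : Scheduler M, ∑' j : J, (qf j : ℝ) * reachProb M σ s (Tf j)) =
      (⨅ τ : Scheduler Mu,
        expTotalReward Mu τ (unfoldRewardIdx Tf qf) (s, (∅ : Set (Set S)))) := by
  haveI : Fintype S := Fintype.ofFinite S
  haveI : Fintype A := Fintype.ofFinite A
  haveI : Fintype J := Fintype.ofFinite J
  have hVle : ∀ σ : Scheduler M,
      (∑' j : J, (qf j : ℝ) * reachProb M σ s (Tf j)) ≤ ∑ j : J, |(qf j : ℝ)| := by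
    intro σ
    rw [tsum_fintype]
    refine Finset.sum_le_sum fun j _ => ?_
    refine le_trans (le_abs_self _) ?_
    rw [abs_mul, abs_of_nonneg (reachProb_nonneg M σ s (Tf j))]
    exact mul_le_of_le_one_right (abs_nonneg _) (reachProb_le_one M σ s (Tf j))
  have hVge : ∀ σ : Scheduler M,
      -(∑ j : J, |(qf j : ℝ)|) ≤ ∑' j : J, (qf j : ℝ) * reachProb M σ s (Tf j) := by
    intro σ
    rw [tsum_fintype, ← Finset.sum_neg_distrib]
    refine Finset.sum_le_sum fun j _ => ?_
    refine le_trans ?_ (neg_abs_le _)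
    refine neg_le_neg ?_
    rw [abs_mul, abs_of_nonneg (reachProb_nonneg M σ s (Tf j))]
    exact mul_le_of_le_one_right (abs_nonneg _) (reachProb_le_one M σ s (Tf j))
  have hFW : ∀ σ : Scheduler M,
      expTotalReward Mu (upSched hMu σ) (unfoldRewardIdx Tf qf) (s, (∅ : Set (Set S)))
        = ∑' j : J, (qf j : ℝ) * reachProb M σ s (Tf j) :=
    fun σ => value_eq M Mu Tf qf hMu σ (upSched hMu σ) (upSched_act hMu σ) s
  have hGW : ∀ τ : Scheduler Mu,
      expTotalReward Mu τ (unfoldRewardIdx Tf qf) (s, (∅ : Set (Set S)))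
        = ∑' j : J, (qf j : ℝ) * reachProb M (downSched hMu τ) s (Tf j) :=
    fun τ => value_eq M Mu Tf qf hMu (downSched hMu τ) τ (fun p => rfl) s
  have bddV : BddAbove (Set.range fun σ : Scheduler M =>
      ∑' j : J, (qf j : ℝ) * reachProb M σ s (Tf j)) :=
    ⟨∑ j : J, |(qf j : ℝ)|, by rintro _ ⟨σ, rfl⟩; exact hVle σ⟩
  have bddW : BddAbove (Set.range fun τ : Scheduler Mu =>
      expTotalReward Mu τ (unfoldRewardIdx Tf qf) (s, (∅ : Set (Set S)))) :=
    ⟨∑ j : J, |(qf j : ℝ)|, by rintro _ ⟨τ, rfl⟩; dsimp only; rw [hGW τ]; exact hVle _⟩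
  have bddVb : BddBelow (Set.range fun σ : Scheduler M =>
      ∑' j : J, (qf j : ℝ) * reachProb M σ s (Tf j)) :=
    ⟨-(∑ j : J, |(qf j : ℝ)|), by rintro _ ⟨σ, rfl⟩; exact hVge σ⟩
  have bddWb : BddBelow (Set.range fun τ : Scheduler Mu =>
      expTotalReward Mu τ (unfoldRewardIdx Tf qf) (s, (∅ : Set (Set S)))) :=
    ⟨-(∑ j : J, |(qf j : ℝ)|), by rintro _ ⟨τ, rfl⟩; dsimp only; rw [hGW τ]; exact hVge _⟩
  constructor
  · refine le_antisymm (ciSup_le fun σ => ?_) (ciSup_le fun τ => ?_)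
    · rw [← hFW σ]
      exact le_ciSup bddW _
    · rw [hGW τ]
      exact le_ciSup bddV _
  · refine le_antisymm (le_ciInf fun τ => ?_) (le_ciInf fun σ => ?_)
    · rw [hGW τ]
      exact ciInf_le bddVb _
    · rw [← hFW σ]
      exact ciInf_le bddWb _
end

section
/- Let M = (S, Act, P) be an MDP with RelReach data (m, n, q₁,…,q_m, q, s₁,…,s_m, k, T₁,…,T_m). Let v^max (resp. v^min) be the supremum (resp. infimum) over all tuples (σ₁,…,σₙ) of schedulers for M of Σ_{i=1}^m qᵢ · Pr^{M,σ_{k(i)}}_{sᵢ}(◇Tᵢ). Then v^max and v^min are each attained by some tuple of schedulers, and for every rational ε ≥ 0: there exist schedulers σ₁,…,σₙ for M with |Σ_{i=1}^m qᵢ · Pr^{M,σ_{k(i)}}_{sᵢ}(◇Tᵢ) − q| ≤ ε if and only if v^min − ε ≤ q ≤ v^max + ε. -/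
open scoped Classical
open Filter

noncomputable section Aux

namespace RelAux

variable {S A : Type} [Fintype S] [Fintype A] {M : MDP S A}

lemma actSum (σ : Scheduler M) (p : FPath S A) : ∑ a : A, σ.act p a = 1 := by
  have := σ.sum_one p; rwa [tsum_fintype] at this

lemma rowSum_enabled {s : S} {a : A} (h : M.Enabled s a) : ∑ s' : S, M.P s a s' = 1 := by
  have : (∑' s', M.P s a s') = 1 := h
  rwa [tsum_fintype] at this

lemma rowSum_nonneg (s : S) (a : A) : 0 ≤ ∑ s' : S, M.P s a s' :=
  Finset.sum_nonneg fun _ _ => M.nonneg _ _ _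

lemma rowSum_le_one (s : S) (a : A) : ∑ s' : S, M.P s a s' ≤ 1 := by
  by_cases h : M.Enabled s a
  · exact le_of_eq (rowSum_enabled h)
  · have := M.zero_of_not_enabled s a h
    rw [tsum_fintype] at this
    rw [this]; norm_num

lemma stepExp_eq_sum (σ : Scheduler M) (p : FPath S A) (g : FPath S A → ℝ) :
    stepExp M σ p g
      = ∑ a : A, σ.act p a * ∑ s' : S, M.P (fpLast p) a s' * g (fpExt p a s') := by
  unfold stepExp
  rw [tsum_fintype]
  refine Finset.sum_congr rfl fun a _ => ?_
  rw [tsum_fintype, Finset.mul_sum]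
  refine Finset.sum_congr rfl fun s' _ => ?_
  ring

lemma stepExp_mono (σ : Scheduler M) (p : FPath S A) {g h : FPath S A → ℝ}
    (hgh : ∀ p', g p' ≤ h p') : stepExp M σ p g ≤ stepExp M σ p h := by
  rw [stepExp_eq_sum, stepExp_eq_sum]
  refine Finset.sum_le_sum fun a _ => ?_
  refine mul_le_mul_of_nonneg_left ?_ (σ.nonneg p a)
  exact Finset.sum_le_sum fun s' _ =>
    mul_le_mul_of_nonneg_left (hgh _) (M.nonneg _ _ _)

lemma stepExp_nonneg (σ : Scheduler M) (p : FPath S A) {g : FPath S A → ℝ}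
    (hg : ∀ p', 0 ≤ g p') : 0 ≤ stepExp M σ p g := by
  rw [stepExp_eq_sum]
  exact Finset.sum_nonneg fun a _ => mul_nonneg (σ.nonneg p a)
    (Finset.sum_nonneg fun s' _ => mul_nonneg (M.nonneg _ _ _) (hg _))

lemma stepExp_le_of (σ : Scheduler M) (p : FPath S A) {g : FPath S A → ℝ} {c : ℝ}
    (hb : ∀ a, M.Enabled (fpLast p) a →
      (∑ s' : S, M.P (fpLast p) a s' * g (fpExt p a s')) ≤ c) :
    stepExp M σ p g ≤ c := by
  rw [stepExp_eq_sum]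
  calc ∑ a : A, σ.act p a * ∑ s' : S, M.P (fpLast p) a s' * g (fpExt p a s')
      ≤ ∑ a : A, σ.act p a * c := by
        refine Finset.sum_le_sum fun a _ => ?_
        by_cases h : M.Enabled (fpLast p) a
        · exact mul_le_mul_of_nonneg_left (hb a h) (σ.nonneg p a)
        · rw [σ.not_enabled p a h]; simp
    _ = c := by rw [← Finset.sum_mul, actSum, one_mul]

lemma stepExp_ge_of (σ : Scheduler M) (p : FPath S A) {g : FPath S A → ℝ} {c : ℝ}
    (hb : ∀ a, M.Enabled (fpLast p) a →
      c ≤ (∑ s' : S, M.P (fpLast p) a s' * g (fpExt p a s'))) :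
    c ≤ stepExp M σ p g := by
  rw [stepExp_eq_sum]
  calc c = ∑ a : A, σ.act p a * c := by rw [← Finset.sum_mul, actSum, one_mul]
    _ ≤ _ := by
        refine Finset.sum_le_sum fun a _ => ?_
        by_cases h : M.Enabled (fpLast p) a
        · exact mul_le_mul_of_nonneg_left (hb a h) (σ.nonneg p a)
        · rw [σ.not_enabled p a h]; simp

lemma stepExp_le_one (σ : Scheduler M) (p : FPath S A) {g : FPath S A → ℝ}
    (hg : ∀ p', g p' ≤ 1) (hg0 : ∀ p', 0 ≤ g p') : stepExp M σ p g ≤ 1 := by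
  refine stepExp_le_of σ p fun a ha => ?_
  calc ∑ s' : S, M.P (fpLast p) a s' * g (fpExt p a s')
      ≤ ∑ s' : S, M.P (fpLast p) a s' * 1 := Finset.sum_le_sum fun s' _ =>
        mul_le_mul_of_nonneg_left (hg _) (M.nonneg _ _ _)
    _ = 1 := by simp [rowSum_enabled ha]

end RelAux
end Aux
noncomputable section Aux2
namespace RelAux
variable {S A : Type} [Fintype S] [Fintype A] {M : MDP S A}

set_option linter.unusedSectionVars false

lemma stepExp_sum (σ : Scheduler M) (p : FPath S A) {ι : Type} (F : Finset ι)
    (h : ι → FPath S A → ℝ) :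
    stepExp M σ p (fun p' => ∑ i ∈ F, h i p') = ∑ i ∈ F, stepExp M σ p (h i) := by
  simp only [RelAux.stepExp_eq_sum, Finset.mul_sum]
  calc ∑ a : A, ∑ s' : S, ∑ i ∈ F, σ.act p a * (M.P (fpLast p) a s' * h i (fpExt p a s'))
      = ∑ a : A, ∑ i ∈ F, ∑ s' : S, σ.act p a * (M.P (fpLast p) a s' * h i (fpExt p a s')) :=
        Finset.sum_congr rfl fun a _ => Finset.sum_comm
    _ = ∑ i ∈ F, ∑ a : A, ∑ s' : S, σ.act p a * (M.P (fpLast p) a s' * h i (fpExt p a s')) :=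
        Finset.sum_comm

lemma stepExp_const_mul (σ : Scheduler M) (p : FPath S A) (c : ℝ) (g : FPath S A → ℝ) :
    stepExp M σ p (fun p' => c * g p') = c * stepExp M σ p g := by
  simp only [RelAux.stepExp_eq_sum, Finset.mul_sum]
  refine Finset.sum_congr rfl fun a _ => ?_
  refine Finset.sum_congr rfl fun s' _ => ?_
  ring
end RelAux
end Aux2
noncomputable section Aux3
namespace RelAux
variable {S A : Type} [Fintype S] [Fintype A] {M : MDP S A}

set_option linter.unusedSectionVars false

/-- Deterministic scheduler given a choice of enabled action for each path. -/
def diracSched (b : FPath S A → A) (hb : ∀ p, M.Enabled (fpLast p) (b p)) :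
    Scheduler M where
  act p a := if a = b p then 1 else 0
  nonneg p a := by by_cases h : a = b p <;> simp [h]
  sum_one p := by
    rw [tsum_fintype]
    simp
  not_enabled p a h := by
    have : a ≠ b p := fun hab => h (hab ▸ hb p)
    simp [this]

lemma exists_enabled_map (M : MDP S A) : ∃ b : S → A, ∀ s, M.Enabled s (b s) := by
  choose b hb using M.exists_enabled
  exact ⟨b, hb⟩

lemma scheduler_nonempty (M : MDP S A) : Nonempty (Scheduler M) := by
  obtain ⟨b, hb⟩ := exists_enabled_map M
  exact ⟨diracSched (fun p => b (fpLast p)) (fun p => hb _)⟩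

lemma stepExp_dirac (b : FPath S A → A) (hb : ∀ p, M.Enabled (fpLast p) (b p))
    (p : FPath S A) (g : FPath S A → ℝ) :
    stepExp M (diracSched b hb) p g
      = ∑ s' : S, M.P (fpLast p) (b p) s' * g (fpExt p (b p) s') := by
  rw [stepExp_eq_sum]
  have : ∀ a : A, (diracSched b hb (M := M)).act p a = if a = b p then 1 else 0 := fun a => rfl
  simp only [this]
  rw [Finset.sum_eq_single (b p)]
  · simp
  · intro a _ ha; simp [ha]
  · intro h; exact absurd (Finset.mem_univ _) h

lemma fpLast_ext (p : FPath S A) (a : A) (s' : S) : fpLast (fpExt p a s') = s' := by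
  unfold fpLast fpExt
  simp

lemma fpLast_nil (s : S) : fpLast ((s, []) : FPath S A) = s := rfl

/-- The list of states of a path. -/
def stList (p : FPath S A) : List S := p.1 :: p.2.map Prod.snd

lemma stList_ext (p : FPath S A) (a : A) (s' : S) :
    stList (fpExt p a s') = stList p ++ [s'] := by
  unfold stList fpExt
  simp

lemma stList_eq_concat (p : FPath S A) :
    stList p = (stList p).dropLast ++ [fpLast p] := by
  obtain ⟨s, l⟩ := p
  induction l using List.reverseRecOn with
  | nil => simp [stList, fpLast]
  | append_singleton l x _ =>
      obtain ⟨a, s'⟩ := x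
      simp [stList, fpLast, List.map_append]
      rw [← List.cons_append, List.dropLast_concat]

end RelAux
end Aux3
noncomputable section Aux4
namespace RelAux
variable {S A : Type} [Fintype S] [Fintype A] {M : MDP S A}
set_option linter.unusedSectionVars false

lemma reachN_nonneg (σ : Scheduler M) (T : Set S) :
    ∀ n p, 0 ≤ reachN M σ T n p := by
  intro n
  induction n with
  | zero => intro p; unfold reachN; split <;> norm_num
  | succ n ih =>
      intro p; unfold reachN; split
      · norm_num
      · exact stepExp_nonneg σ p ih

lemma reachN_le_one (σ : Scheduler M) (T : Set S) :
    ∀ n p, reachN M σ T n p ≤ 1 := by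
  intro n
  induction n with
  | zero => intro p; unfold reachN; split <;> norm_num
  | succ n ih =>
      intro p; unfold reachN; split
      · norm_num
      · exact stepExp_le_one σ p ih (reachN_nonneg σ T n)

lemma reachN_mono (σ : Scheduler M) (T : Set S) :
    ∀ n p, reachN M σ T n p ≤ reachN M σ T (n + 1) p := by
  intro n
  induction n with
  | zero =>
      intro p
      show reachN M σ T 0 p ≤ reachN M σ T 1 p
      unfold reachN; split
      · norm_num
      · exact stepExp_nonneg σ p (reachN_nonneg σ T 0)
  | succ n ih =>
      intro p
      show reachN M σ T (n+1) p ≤ reachN M σ T (n+2) p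
      unfold reachN; split
      · norm_num
      · exact stepExp_mono σ p ih

lemma reachN_monotone (σ : Scheduler M) (T : Set S) (p : FPath S A) :
    Monotone (fun n => reachN M σ T n p) :=
  monotone_nat_of_le_succ fun n => reachN_mono σ T n p

lemma tendsto_reachN (σ : Scheduler M) (T : Set S) (s : S) :
    Filter.Tendsto (fun n => reachN M σ T n (s, []))
      Filter.atTop (nhds (reachProb M σ s T)) := by
  exact tendsto_atTop_ciSup (reachN_monotone σ T (s, []))
    ⟨1, by rintro x ⟨n, rfl⟩; exact reachN_le_one σ T n _⟩

/-- Discounted reachability within `n` steps. -/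
def rL (M : MDP S A) (σ : Scheduler M) (T : Set S) (lam : ℝ) : ℕ → FPath S A → ℝ
  | 0, p => if fpLast p ∈ T then 1 else 0
  | n + 1, p => if fpLast p ∈ T then 1 else lam * stepExp M σ p (rL M σ T lam n)

lemma rL_nonneg (σ : Scheduler M) (T : Set S) {lam : ℝ} (h0 : 0 ≤ lam) :
    ∀ n p, 0 ≤ rL M σ T lam n p := by
  intro n
  induction n with
  | zero => intro p; unfold rL; split <;> norm_num
  | succ n ih =>
      intro p; unfold rL; split
      · norm_num
      · exact mul_nonneg h0 (stepExp_nonneg σ p ih)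

lemma rL_le_reachN (σ : Scheduler M) (T : Set S) {lam : ℝ} (h0 : 0 ≤ lam) (h1 : lam ≤ 1) :
    ∀ n p, rL M σ T lam n p ≤ reachN M σ T n p := by
  intro n
  induction n with
  | zero => intro p; unfold rL reachN; exact le_refl _
  | succ n ih =>
      intro p
      show rL M σ T lam (n+1) p ≤ reachN M σ T (n+1) p
      unfold rL reachN; split
      · norm_num
      · calc lam * stepExp M σ p (rL M σ T lam n)
            ≤ 1 * stepExp M σ p (rL M σ T lam n) :=
              mul_le_mul_of_nonneg_right h1 (stepExp_nonneg σ p (rL_nonneg σ T h0 n))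
          _ = stepExp M σ p (rL M σ T lam n) := one_mul _
          _ ≤ stepExp M σ p (reachN M σ T n) := stepExp_mono σ p ih

lemma rL_le_one (σ : Scheduler M) (T : Set S) {lam : ℝ} (h0 : 0 ≤ lam) (h1 : lam ≤ 1)
    (n : ℕ) (p : FPath S A) : rL M σ T lam n p ≤ 1 :=
  le_trans (rL_le_reachN σ T h0 h1 n p) (reachN_le_one σ T n p)

lemma pow_mul_reachN_le_rL (σ : Scheduler M) (T : Set S) {lam : ℝ} (h0 : 0 ≤ lam)
    (h1 : lam ≤ 1) : ∀ n p, lam ^ n * reachN M σ T n p ≤ rL M σ T lam n p := by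
  intro n
  induction n with
  | zero => intro p; unfold reachN rL; simp
  | succ n ih =>
      intro p
      show lam ^ (n+1) * reachN M σ T (n+1) p ≤ rL M σ T lam (n+1) p
      unfold reachN rL; split
      · rw [mul_one]; exact pow_le_one₀ h0 h1
      · calc lam ^ (n+1) * stepExp M σ p (reachN M σ T n)
            = lam * stepExp M σ p (fun p' => lam ^ n * reachN M σ T n p') := by
              rw [stepExp_const_mul]; ring
          _ ≤ lam * stepExp M σ p (rL M σ T lam n) :=
              mul_le_mul_of_nonneg_left (stepExp_mono σ p ih) h0

lemma rL_mono_n (σ : Scheduler M) (T : Set S) {lam : ℝ} (h0 : 0 ≤ lam) :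
    ∀ n p, rL M σ T lam n p ≤ rL M σ T lam (n + 1) p := by
  intro n
  induction n with
  | zero =>
      intro p
      show rL M σ T lam 0 p ≤ rL M σ T lam 1 p
      unfold rL; split
      · norm_num
      · exact mul_nonneg h0 (stepExp_nonneg σ p (rL_nonneg σ T h0 0))
  | succ n ih =>
      intro p
      show rL M σ T lam (n+1) p ≤ rL M σ T lam (n+2) p
      unfold rL; split
      · norm_num
      · exact mul_le_mul_of_nonneg_left (stepExp_mono σ p ih) h0

lemma rL_mono_lam (σ : Scheduler M) (T : Set S) {lam lam' : ℝ} (h0 : 0 ≤ lam)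
    (hll : lam ≤ lam') : ∀ n p, rL M σ T lam n p ≤ rL M σ T lam' n p := by
  intro n
  induction n with
  | zero => intro p; unfold rL; exact le_refl _
  | succ n ih =>
      intro p
      show rL M σ T lam (n+1) p ≤ rL M σ T lam' (n+1) p
      unfold rL; split
      · norm_num
      · calc lam * stepExp M σ p (rL M σ T lam n)
            ≤ lam' * stepExp M σ p (rL M σ T lam n) :=
              mul_le_mul_of_nonneg_right hll (stepExp_nonneg σ p (rL_nonneg σ T h0 n))
          _ ≤ lam' * stepExp M σ p (rL M σ T lam' n) :=
              mul_le_mul_of_nonneg_left (stepExp_mono σ p ih) (le_trans h0 hll)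

/-- Discounted reachability value from a path. -/
def reachLam (M : MDP S A) (σ : Scheduler M) (T : Set S) (lam : ℝ) (p : FPath S A) : ℝ :=
  ⨆ n : ℕ, rL M σ T lam n p

lemma tendsto_rL (σ : Scheduler M) (T : Set S) {lam : ℝ} (h0 : 0 ≤ lam) (h1 : lam ≤ 1)
    (p : FPath S A) :
    Filter.Tendsto (fun n => rL M σ T lam n p) Filter.atTop
      (nhds (reachLam M σ T lam p)) :=
  tendsto_atTop_ciSup (monotone_nat_of_le_succ fun n => rL_mono_n σ T h0 n p)
    ⟨1, by rintro x ⟨n, rfl⟩; exact rL_le_one σ T h0 h1 n p⟩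

lemma reachLam_le_reachProb (σ : Scheduler M) (T : Set S) {lam : ℝ} (h0 : 0 ≤ lam)
    (h1 : lam ≤ 1) (s : S) : reachLam M σ T lam (s, []) ≤ reachProb M σ s T := by
  refine ciSup_le fun n => ?_
  refine le_trans (rL_le_reachN σ T h0 h1 n _) ?_
  exact le_ciSup (f := fun n => reachN M σ T n ((s, []) : FPath S A))
    ⟨1, by rintro x ⟨n', rfl⟩; exact reachN_le_one σ T n' _⟩ n

end RelAux
end Aux4
noncomputable section Aux5
namespace RelAux
variable {S A : Type} [Fintype S] [Fintype A] {M : MDP S A}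
set_option linter.unusedSectionVars false

section ActiveSets

variable {m : ℕ} (T : Fin m → Set S)

/-- Indices whose target contains `s`. -/
def hitF (s : S) : Finset (Fin m) := Finset.univ.filter (fun i => s ∈ T i)

/-- Indices hit by some state in the list. -/
def hitOf (L : List S) : Finset (Fin m) := L.foldr (fun s acc => hitF T s ∪ acc) ∅

lemma hitOf_general (L : List S) (X : Finset (Fin m)) :
    L.foldr (fun s acc => hitF T s ∪ acc) X = hitOf T L ∪ X := by
  induction L with
  | nil => simp [hitOf]
  | cons s l ih =>
      simp only [List.foldr_cons, ih]
      show hitF T s ∪ (hitOf T l ∪ X) = hitOf T (s :: l) ∪ X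
      have : hitOf T (s :: l) = hitF T s ∪ hitOf T l := rfl
      rw [this, Finset.union_assoc]

lemma hitOf_concat (L : List S) (y : S) :
    hitOf T (L ++ [y]) = hitOf T L ∪ hitF T y := by
  unfold hitOf
  rw [List.foldr_append]
  show L.foldr (fun s acc => hitF T s ∪ acc) (hitF T y ∪ ∅) = _
  rw [Finset.union_empty, hitOf_general]
  rfl

/-- The states of a path excluding the last one. -/
def before (p : FPath S A) : List S := (stList p).dropLast

/-- Active index set at path `p`, starting from `J`. -/
def act' (J : Finset (Fin m)) (p : FPath S A) : Finset (Fin m) := J \ hitOf T (before p)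

lemma act'_nil (J : Finset (Fin m)) (s : S) : act' T J ((s, []) : FPath S A) = J := by
  unfold act' before
  show J \ hitOf T ([s].dropLast) = J
  simp [hitOf]

lemma before_ext (p : FPath S A) (a : A) (s' : S) :
    before (fpExt p a s') = stList p := by
  unfold before
  rw [stList_ext]
  exact List.dropLast_concat

lemma act'_ext (J : Finset (Fin m)) (p : FPath S A) (a : A) (s' : S) :
    act' T J (fpExt p a s') = act' T J p \ hitF T (fpLast p) := by
  unfold act'
  rw [before_ext]
  have h1 : hitOf T (stList p) = hitOf T (before p) ∪ hitF T (fpLast p) := by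
    conv_lhs => rw [stList_eq_concat p]
    rw [hitOf_concat]
    rfl
  rw [h1]
  ext i
  simp only [Finset.mem_sdiff, Finset.mem_union]
  tauto

end ActiveSets

section Dsum

variable {m : ℕ} (q : Fin m → ℝ) (T : Fin m → Set S)

/-- Combined discounted value of active indices. -/
def D (σ : Scheduler M) (lam : ℝ) (n : ℕ) (J : Finset (Fin m)) (p : FPath S A) : ℝ :=
  ∑ i ∈ J, q i * rL M σ (T i) lam n p

lemma D_rec (σ : Scheduler M) (lam : ℝ) (n : ℕ) (J : Finset (Fin m)) (p : FPath S A) :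
    D q T σ lam (n + 1) J p
      = (∑ i ∈ J ∩ hitF T (fpLast p), q i)
        + lam * stepExp M σ p (fun p' => D q T σ lam n (J \ hitF T (fpLast p)) p') := by
  unfold D
  rw [← Finset.sum_inter_add_sum_sdiff J (hitF T (fpLast p))
    (fun i => q i * rL M σ (T i) lam (n + 1) p)]
  congr 1
  · refine Finset.sum_congr rfl fun i hi => ?_
    have hmem : fpLast p ∈ T i := by
      have := (Finset.mem_inter.mp hi).2
      simpa [hitF] using this
    show q i * rL M σ (T i) lam (n+1) p = q i
    unfold rL
    rw [if_pos hmem, mul_one]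
  · have hstep : ∀ i ∈ J \ hitF T (fpLast p),
        q i * rL M σ (T i) lam (n+1) p
          = lam * (q i * stepExp M σ p (rL M σ (T i) lam n)) := by
      intro i hi
      have hmem : fpLast p ∉ T i := by
        have := (Finset.mem_sdiff.mp hi).2
        simpa [hitF] using this
      show q i * rL M σ (T i) lam (n+1) p = _
      unfold rL
      rw [if_neg hmem]; ring
    rw [Finset.sum_congr rfl hstep, ← Finset.mul_sum]
    congr 1
    rw [stepExp_sum]
    refine Finset.sum_congr rfl fun i _ => ?_
    rw [← stepExp_const_mul]

end Dsum
end RelAux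
end Aux5
noncomputable section Aux6
namespace RelAux
variable {S A : Type} [Fintype S] [Fintype A] {M : MDP S A}
set_option linter.unusedSectionVars false

lemma abs_sup'_sub_sup'_le {ι : Type} (t : Finset ι) (ht : t.Nonempty) (f g : ι → ℝ)
    (c : ℝ) (h : ∀ a ∈ t, |f a - g a| ≤ c) :
    |t.sup' ht f - t.sup' ht g| ≤ c := by
  rw [abs_sub_le_iff]
  constructor
  · rw [sub_le_iff_le_add]
    refine Finset.sup'_le _ _ fun a ha => ?_
    have h1 := (abs_le.mp (h a ha)).2
    have h2 : g a ≤ t.sup' ht g := Finset.le_sup' g ha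
    linarith
  · rw [sub_le_iff_le_add]
    refine Finset.sup'_le _ _ fun a ha => ?_
    have h1 := (abs_le.mp (h a ha)).1
    have h2 : f a ≤ t.sup' ht f := Finset.le_sup' f ha
    linarith

/-- Enabled actions as a finset. -/
def EnF (M : MDP S A) (s : S) : Finset A := Finset.univ.filter (fun a => M.Enabled s a)

lemma EnF_nonempty (M : MDP S A) (s : S) : (EnF M s).Nonempty := by
  obtain ⟨a, ha⟩ := M.exists_enabled s
  exact ⟨a, by simp [EnF]; exact ha⟩

lemma mem_EnF {s : S} {a : A} : a ∈ EnF M s ↔ M.Enabled s a := by simp [EnF]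

section Bellman

variable {m : ℕ} (q : Fin m → ℝ) (T : Fin m → Set S)

lemma exists_bellman_fix (M : MDP S A) {lam : ℝ} (h0 : 0 ≤ lam) (h1 : lam < 1) :
    ∃ x : Finset (Fin m) × S → ℝ,
      ∀ J s, x (J, s) = (∑ i ∈ J ∩ hitF T s, q i)
        + lam * (EnF M s).sup' (EnF_nonempty M s)
            (fun a => ∑ s' : S, M.P s a s' * x (J \ hitF T s, s')) := by
  set Φ : (Finset (Fin m) × S → ℝ) → (Finset (Fin m) × S → ℝ) :=
    fun x c => (∑ i ∈ c.1 ∩ hitF T c.2, q i)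
      + lam * (EnF M c.2).sup' (EnF_nonempty M c.2)
          (fun a => ∑ s' : S, M.P c.2 a s' * x (c.1 \ hitF T c.2, s')) with hΦ
  have hlip : ∀ x y, dist (Φ x) (Φ y) ≤ lam * dist x y := by
    intro x y
    rw [dist_pi_le_iff (mul_nonneg h0 dist_nonneg)]
    intro c
    rw [Real.dist_eq]
    have heq : Φ x c - Φ y c
        = lam * ((EnF M c.2).sup' (EnF_nonempty M c.2)
            (fun a => ∑ s' : S, M.P c.2 a s' * x (c.1 \ hitF T c.2, s'))
          - (EnF M c.2).sup' (EnF_nonempty M c.2)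
            (fun a => ∑ s' : S, M.P c.2 a s' * y (c.1 \ hitF T c.2, s'))) := by
      simp only [hΦ]; ring
    rw [heq, abs_mul, abs_of_nonneg h0]
    refine mul_le_mul_of_nonneg_left ?_ h0
    refine abs_sup'_sub_sup'_le _ _ _ _ _ fun a _ => ?_
    rw [← Finset.sum_sub_distrib]
    calc |∑ s' : S, (M.P c.2 a s' * x (c.1 \ hitF T c.2, s')
            - M.P c.2 a s' * y (c.1 \ hitF T c.2, s'))|
        ≤ ∑ s' : S, |M.P c.2 a s' * x (c.1 \ hitF T c.2, s')
            - M.P c.2 a s' * y (c.1 \ hitF T c.2, s')| := Finset.abs_sum_le_sum_abs _ _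
      _ ≤ ∑ s' : S, M.P c.2 a s' * dist x y := by
          refine Finset.sum_le_sum fun s' _ => ?_
          rw [← mul_sub, abs_mul, abs_of_nonneg (M.nonneg _ _ _)]
          refine mul_le_mul_of_nonneg_left ?_ (M.nonneg _ _ _)
          rw [← Real.dist_eq]
          exact dist_le_pi_dist x y _
      _ ≤ 1 * dist x y := by
          rw [← Finset.sum_mul]
          exact mul_le_mul_of_nonneg_right (rowSum_le_one _ _) dist_nonneg
      _ = dist x y := one_mul _
  have hK : ContractingWith ⟨lam, h0⟩ Φ := by
    constructor
    · exact_mod_cast h1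
    · exact LipschitzWith.of_dist_le_mul hlip
  haveI : Nonempty (Finset (Fin m) × S → ℝ) := ⟨fun _ => 0⟩
  refine ⟨ContractingWith.fixedPoint Φ hK, fun J s => ?_⟩
  have hfp := ContractingWith.fixedPoint_isFixedPt hK
  exact (congrFun hfp (J, s)).symm

end Bellman
end RelAux
end Aux6
noncomputable section Aux7
namespace RelAux
variable {S A : Type} [Fintype S] [Fintype A] {M : MDP S A}
set_option linter.unusedSectionVars false

section Core

variable {m : ℕ} (q : Fin m → ℝ) (T : Fin m → Set S)

lemma D_zero (σ : Scheduler M) (lam : ℝ) (J : Finset (Fin m)) (p : FPath S A) :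
    D q T σ lam 0 J p = ∑ i ∈ J ∩ hitF T (fpLast p), q i := by
  unfold D
  have : J ∩ hitF T (fpLast p) = J.filter (fun i => fpLast p ∈ T i) := by
    ext i; simp [hitF, Finset.mem_inter, Finset.mem_filter, and_comm]
  rw [this, Finset.sum_filter]
  refine Finset.sum_congr rfl fun i _ => ?_
  show q i * rL M σ (T i) lam 0 p = _
  unfold rL
  split <;> simp_all

/-- Upper bound: any scheduler's discounted value is at most the Bellman fixed point. -/
lemma D_le_fix (σ : Scheduler M) {lam : ℝ} (h0 : 0 ≤ lam)
    (x : Finset (Fin m) × S → ℝ)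
    (hx : ∀ J s, x (J, s) = (∑ i ∈ J ∩ hitF T s, q i)
      + lam * (EnF M s).sup' (EnF_nonempty M s)
          (fun a => ∑ s' : S, M.P s a s' * x (J \ hitF T s, s')))
    {C : ℝ} (hCpos : 0 ≤ C)
    (hbase : ∀ J s, |(∑ i ∈ J ∩ hitF T s, q i) - x (J, s)| ≤ C) :
    ∀ n J p, D q T σ lam n J p ≤ x (J, fpLast p) + lam ^ n * C := by
  intro n
  induction n with
  | zero =>
      intro J p
      rw [D_zero]
      have := (abs_le.mp (hbase J (fpLast p))).2
      simp only [pow_zero, one_mul]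
      linarith
  | succ n ih =>
      intro J p
      rw [D_rec, hx J (fpLast p)]
      set J' := J \ hitF T (fpLast p) with hJ'
      set f : A → ℝ := fun a => ∑ s' : S, M.P (fpLast p) a s' * x (J', s') with hf
      have hpow : (0:ℝ) ≤ lam ^ n * C := mul_nonneg (pow_nonneg h0 n) hCpos
      have h : stepExp M σ p (fun p' => D q T σ lam n J' p')
          ≤ (EnF M (fpLast p)).sup' (EnF_nonempty M (fpLast p)) f + lam ^ n * C := by
        refine stepExp_le_of σ p fun a ha => ?_
        calc ∑ s' : S, M.P (fpLast p) a s' * D q T σ lam n J' (fpExt p a s')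
            ≤ ∑ s' : S, M.P (fpLast p) a s' * (x (J', s') + lam ^ n * C) := by
              refine Finset.sum_le_sum fun s' _ => ?_
              refine mul_le_mul_of_nonneg_left ?_ (M.nonneg _ _ _)
              have := ih J' (fpExt p a s')
              rwa [fpLast_ext] at this
          _ = f a + (∑ s' : S, M.P (fpLast p) a s') * (lam ^ n * C) := by
              rw [hf]
              simp only [mul_add]
              rw [Finset.sum_add_distrib, Finset.sum_mul]
          _ = f a + lam ^ n * C := by rw [rowSum_enabled ha, one_mul]
          _ ≤ _ := by
              have : f a ≤ (EnF M (fpLast p)).sup' (EnF_nonempty M (fpLast p)) f :=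
                Finset.le_sup' f (mem_EnF.mpr ha)
              linarith
      have hmul := mul_le_mul_of_nonneg_left h h0
      have hring : lam * ((EnF M (fpLast p)).sup' (EnF_nonempty M (fpLast p)) f + lam ^ n * C)
          = lam * (EnF M (fpLast p)).sup' (EnF_nonempty M (fpLast p)) f + lam ^ (n+1) * C := by
        ring
      linarith

/-- Fix an action map to be enabled. -/
def fixb (M : MDP S A) (b : Finset (Fin m) × S → A) (c : Finset (Fin m) × S) : A :=
  if M.Enabled c.2 (b c) then b c else (M.exists_enabled c.2).choose

lemma fixb_enabled (b : Finset (Fin m) × S → A) (c : Finset (Fin m) × S) :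
    M.Enabled c.2 (fixb M b c) := by
  unfold fixb
  split
  · assumption
  · exact (M.exists_enabled c.2).choose_spec

lemma fixb_eq {b : Finset (Fin m) × S → A} {c : Finset (Fin m) × S}
    (h : M.Enabled c.2 (b c)) : fixb M b c = b c := if_pos h

/-- The greedy finite-memory scheduler induced by an action map. -/
def greedySched (M : MDP S A) (T : Fin m → Set S) (J0 : S → Finset (Fin m))
    (b : Finset (Fin m) × S → A) : Scheduler M :=
  diracSched (fun p => fixb M b (act' T (J0 p.1) p, fpLast p))
    (fun p => fixb_enabled b ((act' T (J0 p.1) p, fpLast p)))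

/-- The greedy scheduler attains the Bellman fixed point (up to `lam ^ n` error). -/
lemma D_greedy_close (J0 : S → Finset (Fin m)) {lam : ℝ} (h0 : 0 ≤ lam)
    (x : Finset (Fin m) × S → ℝ)
    (hx : ∀ J s, x (J, s) = (∑ i ∈ J ∩ hitF T s, q i)
      + lam * (EnF M s).sup' (EnF_nonempty M s)
          (fun a => ∑ s' : S, M.P s a s' * x (J \ hitF T s, s')))
    (b : Finset (Fin m) × S → A)
    (hbmem : ∀ c, b c ∈ EnF M c.2)
    (hbeq : ∀ c : Finset (Fin m) × S,
      (EnF M c.2).sup' (EnF_nonempty M c.2)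
          (fun a => ∑ s' : S, M.P c.2 a s' * x (c.1 \ hitF T c.2, s'))
        = ∑ s' : S, M.P c.2 (b c) s' * x (c.1 \ hitF T c.2, s'))
    {C : ℝ} (hCpos : 0 ≤ C)
    (hbase : ∀ J s, |(∑ i ∈ J ∩ hitF T s, q i) - x (J, s)| ≤ C) :
    ∀ n p, |D q T (greedySched M T J0 b) lam n (act' T (J0 p.1) p) p
        - x (act' T (J0 p.1) p, fpLast p)| ≤ lam ^ n * C := by
  intro n
  induction n with
  | zero =>
      intro p
      rw [D_zero]
      simpa using hbase (act' T (J0 p.1) p) (fpLast p)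
  | succ n ih =>
      intro p
      set τ := greedySched M T J0 b with hτ
      set Ap := act' T (J0 p.1) p with hAp
      set A' := Ap \ hitF T (fpLast p) with hA'
      set c : Finset (Fin m) × S := (Ap, fpLast p) with hc
      have hen : M.Enabled (fpLast p) (b c) := mem_EnF.mp (hbmem c)
      have hbfix : fixb M b c = b c := fixb_eq hen
      rw [D_rec, hx Ap (fpLast p)]
      have hdir : stepExp M τ p (fun p' => D q T τ lam n A' p')
          = ∑ s' : S, M.P (fpLast p) (b c) s' * D q T τ lam n A' (fpExt p (b c) s') := by
        rw [hτ]
        unfold greedySched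
        rw [stepExp_dirac]
        rw [← hAp, ← hc, hbfix]
      rw [hdir, hbeq c]
      have key : |(∑ s' : S, M.P (fpLast p) (b c) s' * D q T τ lam n A' (fpExt p (b c) s'))
          - ∑ s' : S, M.P (fpLast p) (b c) s' * x (A', s')| ≤ lam ^ n * C := by
        rw [← Finset.sum_sub_distrib]
        calc |∑ s' : S, (M.P (fpLast p) (b c) s' * D q T τ lam n A' (fpExt p (b c) s')
                - M.P (fpLast p) (b c) s' * x (A', s'))|
            ≤ ∑ s' : S, |M.P (fpLast p) (b c) s' * D q T τ lam n A' (fpExt p (b c) s')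
                - M.P (fpLast p) (b c) s' * x (A', s')| := Finset.abs_sum_le_sum_abs _ _
          _ ≤ ∑ s' : S, M.P (fpLast p) (b c) s' * (lam ^ n * C) := by
              refine Finset.sum_le_sum fun s' _ => ?_
              rw [← mul_sub, abs_mul, abs_of_nonneg (M.nonneg _ _ _)]
              refine mul_le_mul_of_nonneg_left ?_ (M.nonneg _ _ _)
              have := ih (fpExt p (b c) s')
              rw [fpLast_ext] at this
              have hact : act' T (J0 (fpExt p (b c) s').1) (fpExt p (b c) s') = A' := by
                have h1 : (fpExt p (b c) s').1 = p.1 := rfl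
                rw [h1, act'_ext, ← hAp, ← hA']
              rwa [hact] at this
          _ = (∑ s' : S, M.P (fpLast p) (b c) s') * (lam ^ n * C) := by
              rw [Finset.sum_mul]
          _ ≤ 1 * (lam ^ n * C) := by
              refine mul_le_mul_of_nonneg_right (rowSum_le_one _ _) ?_
              exact mul_nonneg (pow_nonneg h0 n) hCpos
          _ = lam ^ n * C := one_mul _
      have habs : |(∑ i ∈ Ap ∩ hitF T (fpLast p), q i)
            + lam * (∑ s' : S, M.P (fpLast p) (b c) s' * D q T τ lam n A' (fpExt p (b c) s'))
          - ((∑ i ∈ Ap ∩ hitF T (fpLast p), q i)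
            + lam * (∑ s' : S, M.P (fpLast p) (b c) s' * x (A', s')))|
          = lam * |(∑ s' : S, M.P (fpLast p) (b c) s' * D q T τ lam n A' (fpExt p (b c) s'))
            - ∑ s' : S, M.P (fpLast p) (b c) s' * x (A', s')| := by
        have h2 : (∑ i ∈ Ap ∩ hitF T (fpLast p), q i)
            + lam * (∑ s' : S, M.P (fpLast p) (b c) s' * D q T τ lam n A' (fpExt p (b c) s'))
          - ((∑ i ∈ Ap ∩ hitF T (fpLast p), q i)
            + lam * (∑ s' : S, M.P (fpLast p) (b c) s' * x (A', s')))
          = lam * ((∑ s' : S, M.P (fpLast p) (b c) s' * D q T τ lam n A' (fpExt p (b c) s'))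
            - ∑ s' : S, M.P (fpLast p) (b c) s' * x (A', s')) := by ring
        rw [h2, abs_mul, abs_of_nonneg h0]
      rw [habs]
      calc lam * |(∑ s' : S, M.P (fpLast p) (b c) s' * D q T τ lam n A' (fpExt p (b c) s'))
            - ∑ s' : S, M.P (fpLast p) (b c) s' * x (A', s')|
          ≤ lam * (lam ^ n * C) := mul_le_mul_of_nonneg_left key h0
        _ = lam ^ (n+1) * C := by ring

end Core
end RelAux
end Aux7
noncomputable section Aux8
namespace RelAux
variable {S A : Type} [Fintype S] [Fintype A] {M : MDP S A}
set_option linter.unusedSectionVars false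

section Limits

variable {m : ℕ} (q : Fin m → ℝ) (T : Fin m → Set S)

lemma tendsto_D (σ : Scheduler M) {lam : ℝ} (h0 : 0 ≤ lam) (h1 : lam ≤ 1)
    (J : Finset (Fin m)) (p : FPath S A) :
    Filter.Tendsto (fun n => D q T σ lam n J p) Filter.atTop
      (nhds (∑ i ∈ J, q i * reachLam M σ (T i) lam p)) := by
  refine tendsto_finset_sum J fun i _ => ?_
  exact (tendsto_rL σ (T i) h0 h1 p).const_mul (q i)

lemma sumReachLam_le_fix (σ : Scheduler M) {lam : ℝ} (h0 : 0 ≤ lam) (h1 : lam < 1)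
    (x : Finset (Fin m) × S → ℝ)
    (hx : ∀ J s, x (J, s) = (∑ i ∈ J ∩ hitF T s, q i)
      + lam * (EnF M s).sup' (EnF_nonempty M s)
          (fun a => ∑ s' : S, M.P s a s' * x (J \ hitF T s, s')))
    {C : ℝ} (hCpos : 0 ≤ C)
    (hbase : ∀ J s, |(∑ i ∈ J ∩ hitF T s, q i) - x (J, s)| ≤ C)
    (J : Finset (Fin m)) (p : FPath S A) :
    ∑ i ∈ J, q i * reachLam M σ (T i) lam p ≤ x (J, fpLast p) := by
  have hL := tendsto_D q T σ h0 h1.le J p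
  have hR : Filter.Tendsto (fun n => x (J, fpLast p) + lam ^ n * C) Filter.atTop
      (nhds (x (J, fpLast p) + 0)) := by
    have := ((tendsto_pow_atTop_nhds_zero_of_lt_one h0 h1).mul_const C).const_add
      (x (J, fpLast p))
    rw [zero_mul] at this
    exact this
  rw [add_zero] at hR
  exact le_of_tendsto_of_tendsto' hL hR
    (fun n => D_le_fix q T σ h0 x hx hCpos hbase n J p)

lemma sumReachLam_greedy (J0 : S → Finset (Fin m)) {lam : ℝ} (h0 : 0 ≤ lam) (h1 : lam < 1)
    (x : Finset (Fin m) × S → ℝ)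
    (hx : ∀ J s, x (J, s) = (∑ i ∈ J ∩ hitF T s, q i)
      + lam * (EnF M s).sup' (EnF_nonempty M s)
          (fun a => ∑ s' : S, M.P s a s' * x (J \ hitF T s, s')))
    (b : Finset (Fin m) × S → A)
    (hbmem : ∀ c, b c ∈ EnF M c.2)
    (hbeq : ∀ c : Finset (Fin m) × S,
      (EnF M c.2).sup' (EnF_nonempty M c.2)
          (fun a => ∑ s' : S, M.P c.2 a s' * x (c.1 \ hitF T c.2, s'))
        = ∑ s' : S, M.P c.2 (b c) s' * x (c.1 \ hitF T c.2, s'))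
    {C : ℝ} (hCpos : 0 ≤ C)
    (hbase : ∀ J s, |(∑ i ∈ J ∩ hitF T s, q i) - x (J, s)| ≤ C)
    (p : FPath S A) :
    ∑ i ∈ act' T (J0 p.1) p, q i * reachLam M (greedySched M T J0 b) (T i) lam p
      = x (act' T (J0 p.1) p, fpLast p) := by
  set τ := greedySched M T J0 b
  have hL := tendsto_D q T τ h0 h1.le (act' T (J0 p.1) p) p
  have hsq : Filter.Tendsto (fun n => D q T τ lam n (act' T (J0 p.1) p) p) Filter.atTop
      (nhds (x (act' T (J0 p.1) p, fpLast p))) := by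
    rw [tendsto_iff_dist_tendsto_zero]
    have hb0 : Filter.Tendsto (fun n : ℕ => lam ^ n * C) Filter.atTop (nhds 0) := by
      have := (tendsto_pow_atTop_nhds_zero_of_lt_one h0 h1).mul_const C
      rwa [zero_mul] at this
    refine squeeze_zero (g := fun n : ℕ => lam ^ n * C) (fun n => dist_nonneg)
      (fun n => ?_) hb0
    rw [Real.dist_eq]
    exact D_greedy_close q T J0 h0 x hx b hbmem hbeq hCpos hbase n p
  exact tendsto_nhds_unique hL hsq

lemma discounted_opt [Nonempty S] (J0 : S → Finset (Fin m)) {lam : ℝ}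
    (h0 : 0 ≤ lam) (h1 : lam < 1) :
    ∃ b : Finset (Fin m) × S → A, ∀ (σ : Scheduler M) (s : S),
      (∑ i ∈ J0 s, q i * reachLam M σ (T i) lam ((s, []) : FPath S A))
        ≤ ∑ i ∈ J0 s, q i * reachLam M (greedySched M T J0 b) (T i) lam
            ((s, []) : FPath S A) := by
  obtain ⟨x, hx⟩ := exists_bellman_fix q T M h0 h1
  choose b hbmem hbeq using fun c : Finset (Fin m) × S =>
    Finset.exists_mem_eq_sup' (EnF_nonempty M c.2)
      (fun a => ∑ s' : S, M.P c.2 a s' * x (c.1 \ hitF T c.2, s'))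
  set C : ℝ := max 0 (Finset.univ.sup' Finset.univ_nonempty
    (fun c : Finset (Fin m) × S => |(∑ i ∈ c.1 ∩ hitF T c.2, q i) - x c|)) with hC
  have hCpos : 0 ≤ C := le_max_left _ _
  have hbase : ∀ J s, |(∑ i ∈ J ∩ hitF T s, q i) - x (J, s)| ≤ C := by
    intro J s
    refine le_trans ?_ (le_max_right _ _)
    exact Finset.le_sup' (f := fun c : Finset (Fin m) × S =>
      |(∑ i ∈ c.1 ∩ hitF T c.2, q i) - x c|) (Finset.mem_univ (J, s))
  refine ⟨b, fun σ s => ?_⟩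
  have hle := sumReachLam_le_fix q T σ h0 h1 x hx hCpos hbase (J0 s) ((s, []) : FPath S A)
  have heq := sumReachLam_greedy q T J0 h0 h1 x hx b hbmem hbeq hCpos hbase
    ((s, []) : FPath S A)
  rw [show ((s, []) : FPath S A).1 = s from rfl, act'_nil] at heq
  rw [show fpLast ((s, []) : FPath S A) = s from rfl] at hle heq
  rw [heq]
  exact hle

end Limits
end RelAux
end Aux8
noncomputable section Aux9
namespace RelAux
variable {S A : Type} [Fintype S] [Fintype A] {M : MDP S A}
set_option linter.unusedSectionVars false

/-- The sequence of discount factors tending to 1. -/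
def lamseq (k : ℕ) : ℝ := 1 - 1 / (k + 2)

lemma lamseq_nonneg (k : ℕ) : 0 ≤ lamseq k := by
  unfold lamseq
  have hk : (0:ℝ) ≤ (k:ℝ) := Nat.cast_nonneg k
  have h2 : (1:ℝ) ≤ (k:ℝ) + 2 := by linarith
  have : 1 / ((k:ℝ) + 2) ≤ 1 := by
    rw [div_le_one (by positivity)]
    exact h2
  linarith

lemma lamseq_lt_one (k : ℕ) : lamseq k < 1 := by
  unfold lamseq
  have : 0 < 1 / ((k:ℝ) + 2) := by positivity
  linarith

lemma lamseq_monotone : Monotone lamseq := by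
  intro a b hab
  unfold lamseq
  have h1 : (a:ℝ) + 2 ≤ (b:ℝ) + 2 := by
    have : (a:ℝ) ≤ b := Nat.cast_le.mpr hab
    linarith
  have := one_div_le_one_div_of_le (by positivity : (0:ℝ) < (a:ℝ) + 2) h1
  linarith

lemma lamseq_tendsto : Filter.Tendsto lamseq Filter.atTop (nhds 1) := by
  have h : Filter.Tendsto (fun k : ℕ => 1 / ((k:ℝ) + 2)) Filter.atTop (nhds 0) := by
    have hcomp : Filter.Tendsto (fun k : ℕ => ((k:ℝ) + 2)) Filter.atTop Filter.atTop :=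
      Filter.tendsto_atTop_add_const_right _ 2 tendsto_natCast_atTop_atTop
    have := tendsto_inv_atTop_zero.comp hcomp
    simpa [one_div, Function.comp_def] using this
  have := h.const_sub 1
  rw [sub_zero] at this
  exact this

lemma tendsto_reachLam_seq (σ : Scheduler M) (T : Set S) (s : S) :
    Filter.Tendsto (fun k => reachLam M σ T (lamseq k) ((s, []) : FPath S A))
      Filter.atTop (nhds (reachProb M σ s T)) := by
  set F : ℕ → ℝ := fun k => reachLam M σ T (lamseq k) ((s, []) : FPath S A) with hF
  have hFm : Monotone F := by
    intro a b hab
    refine ciSup_mono ⟨1, ?_⟩ fun n => ?_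
    · rintro y ⟨n, rfl⟩
      exact rL_le_one σ T (lamseq_nonneg b) (lamseq_lt_one b).le n _
    · exact rL_mono_lam σ T (lamseq_nonneg a) (lamseq_monotone hab) n _
  have hFb : BddAbove (Set.range F) := by
    refine ⟨1, ?_⟩
    rintro y ⟨k, rfl⟩
    exact ciSup_le fun n => rL_le_one σ T (lamseq_nonneg k) (lamseq_lt_one k).le n _
  have htd := tendsto_atTop_ciSup hFm hFb
  have hEq : (⨆ k, F k) = reachProb M σ s T := by
    apply le_antisymm
    · exact ciSup_le fun k =>
        reachLam_le_reachProb σ T (lamseq_nonneg k) (lamseq_lt_one k).le s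
    · refine ciSup_le fun n => ?_
      have hlim : Filter.Tendsto
          (fun k => lamseq k ^ n * reachN M σ T n ((s, []) : FPath S A))
          Filter.atTop (nhds (reachN M σ T n ((s, []) : FPath S A))) := by
        have := (lamseq_tendsto.pow n).mul_const (reachN M σ T n ((s, []) : FPath S A))
        rwa [one_pow, one_mul] at this
      refine le_of_tendsto' hlim fun k => ?_
      refine le_trans (pow_mul_reachN_le_rL σ T (lamseq_nonneg k)
        (lamseq_lt_one k).le n _) ?_
      refine le_trans (le_ciSup (f := fun n => rL M σ T (lamseq k) n ((s, []) : FPath S A))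
        ⟨1, ?_⟩ n) ?_
      · rintro y ⟨n', rfl⟩
        exact rL_le_one σ T (lamseq_nonneg k) (lamseq_lt_one k).le n' _
      · exact le_ciSup hFb k
  rwa [hEq] at htd

end RelAux
end Aux9
noncomputable section Aux10
namespace RelAux
variable {S A : Type} [Fintype S] [Fintype A] {M : MDP S A}
set_option linter.unusedSectionVars false

/-- Attainment of the maximum of a weighted sum of reachability probabilities. -/
lemma attains_max [Nonempty S] {m : ℕ} (q : Fin m → ℝ) (st : Fin m → S)
    (T : Fin m → Set S) (I : Finset (Fin m)) :
    ∃ τ : Scheduler M, ∀ σ : Scheduler M,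
      ∑ i ∈ I, q i * reachProb M σ (st i) (T i)
        ≤ ∑ i ∈ I, q i * reachProb M τ (st i) (T i) := by
  set J0 : S → Finset (Fin m) := fun s => I.filter (fun i => st i = s) with hJ0
  choose bfun hbfun using fun k : ℕ =>
    discounted_opt (M := M) q T J0 (lamseq_nonneg k) (lamseq_lt_one k)
  obtain ⟨binf, hfib⟩ := Finite.exists_infinite_fiber bfun
  have hinf : {k | bfun k = binf}.Infinite := by
    have hset : bfun ⁻¹' {binf} = {k | bfun k = binf} := by
      ext k; simp
    rw [← hset, ← Set.infinite_coe_iff]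
    exact hfib
  have hfreq : ∃ᶠ k in Filter.atTop, bfun k = binf :=
    Nat.frequently_atTop_iff_infinite.mpr hinf
  set τ : Scheduler M := greedySched M T J0 binf with hτ
  refine ⟨τ, fun σ => ?_⟩
  set u : ℕ → ℝ := fun k => ∑ i ∈ I, q i * reachLam M σ (T i) (lamseq k)
    ((st i, []) : FPath S A) with hu
  set v : ℕ → ℝ := fun k => ∑ i ∈ I, q i * reachLam M τ (T i) (lamseq k)
    ((st i, []) : FPath S A) with hv
  have hU : Filter.Tendsto u Filter.atTop
      (nhds (∑ i ∈ I, q i * reachProb M σ (st i) (T i))) :=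
    tendsto_finset_sum I fun i _ =>
      (tendsto_reachLam_seq σ (T i) (st i)).const_mul (q i)
  have hV : Filter.Tendsto v Filter.atTop
      (nhds (∑ i ∈ I, q i * reachProb M τ (st i) (T i))) :=
    tendsto_finset_sum I fun i _ =>
      (tendsto_reachLam_seq τ (T i) (st i)).const_mul (q i)
  have hle : ∀ k, bfun k = binf → u k ≤ v k := by
    intro k hk
    have hsum : ∀ ρ : Scheduler M,
        (∑ i ∈ I, q i * reachLam M ρ (T i) (lamseq k) ((st i, []) : FPath S A))
          = ∑ s : S, ∑ i ∈ J0 s, q i * reachLam M ρ (T i) (lamseq k)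
              ((s, []) : FPath S A) := by
      intro ρ
      rw [← Finset.sum_fiberwise_of_maps_to (fun i _ => Finset.mem_univ (st i))
        (fun i => q i * reachLam M ρ (T i) (lamseq k) ((st i, []) : FPath S A))]
      refine Finset.sum_congr rfl fun s _ => ?_
      refine Finset.sum_congr rfl fun i hi => ?_
      have : st i = s := (Finset.mem_filter.mp hi).2
      rw [this]
    rw [hu, hv]
    simp only [hsum]
    refine Finset.sum_le_sum fun s _ => ?_
    have := hbfun k σ s
    rwa [hk] at this
  by_contra hcon
  push_neg at hcon
  have hev : ∀ᶠ k in Filter.atTop, 0 < u k - v k := by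
    have hd := hU.sub hV
    exact hd.eventually (eventually_gt_nhds (by linarith))
  obtain ⟨k, hk1, hk2⟩ := (hfreq.and_eventually hev).exists
  have := hle k hk1
  linarith

end RelAux
end Aux10
noncomputable section Aux11
namespace RelAux
variable {S A : Type} [Fintype S] [Fintype A] {M : MDP S A}
set_option linter.unusedSectionVars false

/-- Weight helper: product of scheduler probabilities along a path. -/
def wgo (σ : Scheduler M) (s : S) : List (A × S) → List (A × S) → ℝ
  | _, [] => 1
  | acc, x :: rest => σ.act (s, acc) x.1 * wgo σ s (acc ++ [x]) rest

/-- The probability weight a scheduler assigns to the action choices along a path. -/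
def wgt (σ : Scheduler M) (p : FPath S A) : ℝ := wgo σ p.1 [] p.2

lemma wgo_append (σ : Scheduler M) (s : S) (x : A × S) :
    ∀ (l acc : List (A × S)),
      wgo σ s acc (l ++ [x]) = wgo σ s acc l * σ.act (s, acc ++ l) x.1 := by
  intro l
  induction l with
  | nil =>
      intro acc
      show σ.act (s, acc) x.1 * wgo σ s (acc ++ [x]) [] = wgo σ s acc [] * σ.act (s, acc ++ []) x.1
      show σ.act (s, acc) x.1 * 1 = 1 * σ.act (s, acc ++ []) x.1
      simp
  | cons y l ih =>
      intro acc
      show σ.act (s, acc) y.1 * wgo σ s (acc ++ [y]) (l ++ [x])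
        = (σ.act (s, acc) y.1 * wgo σ s (acc ++ [y]) l) * σ.act (s, acc ++ (y :: l)) x.1
      rw [ih (acc ++ [y])]
      have : acc ++ [y] ++ l = acc ++ (y :: l) := by simp
      rw [this]
      ring

lemma wgt_ext (σ : Scheduler M) (p : FPath S A) (a : A) (s' : S) :
    wgt σ (fpExt p a s') = wgt σ p * σ.act p a := by
  show wgo σ p.1 [] (p.2 ++ [(a, s')]) = wgo σ p.1 [] p.2 * σ.act p a
  rw [wgo_append]
  simp

lemma wgo_nonneg (σ : Scheduler M) (s : S) :
    ∀ (l acc : List (A × S)), 0 ≤ wgo σ s acc l := by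
  intro l
  induction l with
  | nil => intro acc; exact zero_le_one
  | cons y l ih =>
      intro acc
      exact mul_nonneg (σ.nonneg _ _) (ih (acc ++ [y]))

lemma wgt_nonneg (σ : Scheduler M) (p : FPath S A) : 0 ≤ wgt σ p :=
  wgo_nonneg σ p.1 p.2 []

lemma wgt_nil (σ : Scheduler M) (s : S) : wgt σ ((s, []) : FPath S A) = 1 := rfl

variable (σ0 σ1 : Scheduler M)

/-- Total weight of the mixture. -/
def mixMu (t : ℝ) (p : FPath S A) : ℝ := (1 - t) * wgt σ0 p + t * wgt σ1 p

lemma mixMu_nonneg {t : ℝ} (h0 : 0 ≤ t) (h1 : t ≤ 1) (p : FPath S A) :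
    0 ≤ mixMu σ0 σ1 t p :=
  add_nonneg (mul_nonneg (by linarith) (wgt_nonneg _ _))
    (mul_nonneg h0 (wgt_nonneg _ _))

/-- The posterior-reweighting mixture of two schedulers. -/
def mixSched {t : ℝ} (h0 : 0 ≤ t) (h1 : t ≤ 1) : Scheduler M where
  act p a := if mixMu σ0 σ1 t p = 0 then σ0.act p a
    else ((1 - t) * wgt σ0 p * σ0.act p a + t * wgt σ1 p * σ1.act p a) / mixMu σ0 σ1 t p
  nonneg p a := by
    split
    · exact σ0.nonneg p a
    · refine div_nonneg ?_ (mixMu_nonneg σ0 σ1 h0 h1 p)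
      exact add_nonneg
        (mul_nonneg (mul_nonneg (by linarith) (wgt_nonneg _ _)) (σ0.nonneg p a))
        (mul_nonneg (mul_nonneg h0 (wgt_nonneg _ _)) (σ1.nonneg p a))
  sum_one p := by
    rw [tsum_fintype]
    by_cases h : mixMu σ0 σ1 t p = 0
    · simp only [if_pos h]
      exact actSum σ0 p
    · simp only [if_neg h]
      rw [← Finset.sum_div, Finset.sum_add_distrib, ← Finset.mul_sum, ← Finset.mul_sum,
        actSum, actSum, mul_one, mul_one]
      exact div_self h
  not_enabled p a hna := by
    split
    · exact σ0.not_enabled p a hna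
    · rw [σ0.not_enabled p a hna, σ1.not_enabled p a hna]
      simp

lemma mixMu_mul_act {t : ℝ} (h0 : 0 ≤ t) (h1 : t ≤ 1) (p : FPath S A) (a : A) :
    mixMu σ0 σ1 t p * (mixSched σ0 σ1 h0 h1).act p a
      = (1 - t) * wgt σ0 p * σ0.act p a + t * wgt σ1 p * σ1.act p a := by
  show mixMu σ0 σ1 t p * (if mixMu σ0 σ1 t p = 0 then σ0.act p a else _) = _
  by_cases h : mixMu σ0 σ1 t p = 0
  · rw [if_pos h, h, zero_mul]
    have hw0 : (1 - t) * wgt σ0 p = 0 ∧ t * wgt σ1 p = 0 := by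
      have h1' : 0 ≤ (1 - t) * wgt σ0 p := mul_nonneg (by linarith) (wgt_nonneg _ _)
      have h2' : 0 ≤ t * wgt σ1 p := mul_nonneg h0 (wgt_nonneg _ _)
      constructor <;> [skip; skip] <;>
        · unfold mixMu at h
          linarith
    rw [hw0.1, hw0.2]
    simp
  · rw [if_neg h, mul_div_cancel₀ _ h]

lemma mixMu_ext {t : ℝ} (p : FPath S A) (a : A) (s' : S) :
    mixMu σ0 σ1 t (fpExt p a s')
      = (1 - t) * wgt σ0 p * σ0.act p a + t * wgt σ1 p * σ1.act p a := by
  unfold mixMu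
  rw [wgt_ext, wgt_ext]
  ring

lemma mix_reachN {t : ℝ} (h0 : 0 ≤ t) (h1 : t ≤ 1) (T : Set S) :
    ∀ n p, mixMu σ0 σ1 t p * reachN M (mixSched σ0 σ1 h0 h1) T n p
      = (1 - t) * wgt σ0 p * reachN M σ0 T n p
        + t * wgt σ1 p * reachN M σ1 T n p := by
  intro n
  induction n with
  | zero =>
      intro p
      show mixMu σ0 σ1 t p * (if fpLast p ∈ T then 1 else 0) = _
      by_cases hT : fpLast p ∈ T
      · simp only [reachN, if_pos hT, mul_one]
        rfl
      · simp [reachN, if_neg hT]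
  | succ n ih =>
      intro p
      by_cases hT : fpLast p ∈ T
      · show mixMu σ0 σ1 t p * (if fpLast p ∈ T then 1 else _) = _
        simp only [reachN, if_pos hT, mul_one]
        rfl
      · simp only [reachN, if_neg hT]
        have hexp : ∀ (σ : Scheduler M) (g : FPath S A → ℝ) (c : ℝ),
            c * stepExp M σ p g = ∑ a : A, ∑ s' : S,
              c * (σ.act p a * (M.P (fpLast p) a s' * g (fpExt p a s'))) := by
          intro σ g c
          rw [stepExp_eq_sum, Finset.mul_sum]
          refine Finset.sum_congr rfl fun a _ => ?_
          rw [Finset.mul_sum, Finset.mul_sum]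
        rw [hexp (mixSched σ0 σ1 h0 h1) _ (mixMu σ0 σ1 t p),
          hexp σ0 _ ((1 - t) * wgt σ0 p), hexp σ1 _ (t * wgt σ1 p),
          ← Finset.sum_add_distrib]
        refine Finset.sum_congr rfl fun a _ => ?_
        rw [← Finset.sum_add_distrib]
        refine Finset.sum_congr rfl fun s' _ => ?_
        calc mixMu σ0 σ1 t p * ((mixSched σ0 σ1 h0 h1).act p a
              * (M.P (fpLast p) a s' * reachN M (mixSched σ0 σ1 h0 h1) T n (fpExt p a s')))
            = (mixMu σ0 σ1 t p * (mixSched σ0 σ1 h0 h1).act p a)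
              * (M.P (fpLast p) a s' * reachN M (mixSched σ0 σ1 h0 h1) T n (fpExt p a s')) := by
              ring
          _ = ((1 - t) * wgt σ0 p * σ0.act p a + t * wgt σ1 p * σ1.act p a)
              * (M.P (fpLast p) a s' * reachN M (mixSched σ0 σ1 h0 h1) T n (fpExt p a s')) := by
              rw [mixMu_mul_act σ0 σ1 h0 h1 p a]
          _ = mixMu σ0 σ1 t (fpExt p a s')
              * (M.P (fpLast p) a s' * reachN M (mixSched σ0 σ1 h0 h1) T n (fpExt p a s')) := by
              rw [← mixMu_ext σ0 σ1 p a s']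
          _ = M.P (fpLast p) a s'
              * (mixMu σ0 σ1 t (fpExt p a s')
                * reachN M (mixSched σ0 σ1 h0 h1) T n (fpExt p a s')) := by
              ring
          _ = M.P (fpLast p) a s'
              * ((1 - t) * wgt σ0 (fpExt p a s') * reachN M σ0 T n (fpExt p a s')
                + t * wgt σ1 (fpExt p a s') * reachN M σ1 T n (fpExt p a s')) := by
              rw [ih (fpExt p a s')]
          _ = (1 - t) * wgt σ0 p * (σ0.act p a
                * (M.P (fpLast p) a s' * reachN M σ0 T n (fpExt p a s')))
              + t * wgt σ1 p * (σ1.act p a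
                * (M.P (fpLast p) a s' * reachN M σ1 T n (fpExt p a s'))) := by
              rw [wgt_ext, wgt_ext]
              ring

lemma mix_reachProb {t : ℝ} (h0 : 0 ≤ t) (h1 : t ≤ 1) (T : Set S) (s : S) :
    reachProb M (mixSched σ0 σ1 h0 h1) s T
      = (1 - t) * reachProb M σ0 s T + t * reachProb M σ1 s T := by
  have hkey : ∀ n, reachN M (mixSched σ0 σ1 h0 h1) T n ((s, []) : FPath S A)
      = (1 - t) * reachN M σ0 T n ((s, []) : FPath S A)
        + t * reachN M σ1 T n ((s, []) : FPath S A) := by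
    intro n
    have := mix_reachN σ0 σ1 h0 h1 T n ((s, []) : FPath S A)
    rw [wgt_nil, wgt_nil] at this
    have hmu : mixMu σ0 σ1 t ((s, []) : FPath S A) = 1 := by
      unfold mixMu
      rw [wgt_nil, wgt_nil]
      ring
    rw [hmu, one_mul] at this
    rw [this]
    ring
  have hL := tendsto_reachN (mixSched σ0 σ1 h0 h1) T s
  have hR : Filter.Tendsto (fun n => (1 - t) * reachN M σ0 T n ((s, []) : FPath S A)
      + t * reachN M σ1 T n ((s, []) : FPath S A)) Filter.atTop
      (nhds ((1 - t) * reachProb M σ0 s T + t * reachProb M σ1 s T)) :=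
    ((tendsto_reachN σ0 T s).const_mul (1 - t)).add
      ((tendsto_reachN σ1 T s).const_mul t)
  rw [show (fun n => reachN M (mixSched σ0 σ1 h0 h1) T n ((s, []) : FPath S A))
    = (fun n => (1 - t) * reachN M σ0 T n ((s, []) : FPath S A)
        + t * reachN M σ1 T n ((s, []) : FPath S A)) from funext hkey] at hL
  exact tendsto_nhds_unique hL hR

end RelAux
end Aux11
theorem relReach_approx_equality_iff_between_extrema
    {S A : Type} [Finite S] [Nonempty S] [Finite A] [Nonempty A]
    (M : MDP S A) (m n : ℕ) (hm : 1 ≤ m)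
    (qc : Fin m → ℚ) (q : ℚ) (st : Fin m → S)
    (k : Fin m → Fin n) (hk : Function.Surjective k)
    (T : Fin m → Set S) :
    (∃ σ : Fin n → Scheduler M,
        (∑ i : Fin m, (qc i : ℝ) * reachProb M (σ (k i)) (st i) (T i)) =
          ⨆ σ' : Fin n → Scheduler M,
            ∑ i : Fin m, (qc i : ℝ) * reachProb M (σ' (k i)) (st i) (T i)) ∧
    (∃ σ : Fin n → Scheduler M,
        (∑ i : Fin m, (qc i : ℝ) * reachProb M (σ (k i)) (st i) (T i)) =
          ⨅ σ' : Fin n → Scheduler M,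
            ∑ i : Fin m, (qc i : ℝ) * reachProb M (σ' (k i)) (st i) (T i)) ∧
    (∀ ε : ℚ, 0 ≤ ε →
      ((∃ σ : Fin n → Scheduler M,
          |(∑ i : Fin m, (qc i : ℝ) * reachProb M (σ (k i)) (st i) (T i)) - (q : ℝ)| ≤ (ε : ℝ)) ↔
        ((⨅ σ' : Fin n → Scheduler M,
            ∑ i : Fin m, (qc i : ℝ) * reachProb M (σ' (k i)) (st i) (T i)) - (ε : ℝ) ≤ (q : ℝ) ∧
          (q : ℝ) ≤ (⨆ σ' : Fin n → Scheduler M,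
            ∑ i : Fin m, (qc i : ℝ) * reachProb M (σ' (k i)) (st i) (T i)) + (ε : ℝ)))) := by
  classical
  haveI : Fintype S := Fintype.ofFinite S
  haveI : Fintype A := Fintype.ofFinite A
  haveI : Nonempty (Scheduler M) := RelAux.scheduler_nonempty M
  haveI : Nonempty (Fin n → Scheduler M) := ⟨fun _ => Classical.arbitrary _⟩
  set f : (Fin n → Scheduler M) → ℝ :=
    fun σ' => ∑ i : Fin m, (qc i : ℝ) * reachProb M (σ' (k i)) (st i) (T i) with hf
  -- fiberwise decomposition
  have hfib : ∀ σ' : Fin n → Scheduler M,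
      f σ' = ∑ j : Fin n, ∑ i ∈ Finset.univ.filter (fun i => k i = j),
        (qc i : ℝ) * reachProb M (σ' j) (st i) (T i) := by
    intro σ'
    rw [show f σ' = ∑ i : Fin m, (qc i : ℝ) * reachProb M (σ' (k i)) (st i) (T i) from rfl]
    rw [← Finset.sum_fiberwise_of_maps_to (fun i _ => Finset.mem_univ (k i))
      (fun i => (qc i : ℝ) * reachProb M (σ' (k i)) (st i) (T i))]
    refine Finset.sum_congr rfl fun j _ => Finset.sum_congr rfl fun i hi => ?_
    rw [(Finset.mem_filter.mp hi).2]
  -- attainers per component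
  choose τmax hτmax using fun j : Fin n =>
    RelAux.attains_max (M := M) (fun i => (qc i : ℝ)) st T
      (Finset.univ.filter (fun i => k i = j))
  choose τmin hτmin using fun j : Fin n =>
    RelAux.attains_max (M := M) (fun i => -(qc i : ℝ)) st T
      (Finset.univ.filter (fun i => k i = j))
  have hmax : ∀ σ', f σ' ≤ f τmax := by
    intro σ'
    rw [hfib σ', hfib τmax]
    exact Finset.sum_le_sum fun j _ => hτmax j (σ' j)
  have hmin : ∀ σ', f τmin ≤ f σ' := by
    intro σ'
    rw [hfib σ', hfib τmin]
    refine Finset.sum_le_sum fun j _ => ?_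
    have := hτmin j (σ' j)
    simp only [neg_mul, Finset.sum_neg_distrib] at this
    linarith
  have hbddA : BddAbove (Set.range f) := ⟨f τmax, by rintro y ⟨σ', rfl⟩; exact hmax σ'⟩
  have hbddB : BddBelow (Set.range f) := ⟨f τmin, by rintro y ⟨σ', rfl⟩; exact hmin σ'⟩
  have hSmax : f τmax = ⨆ σ', f σ' := le_antisymm (le_ciSup hbddA τmax) (ciSup_le hmax)
  have hSmin : f τmin = ⨅ σ', f σ' := le_antisymm (le_ciInf hmin) (ciInf_le hbddB τmin)
  refine ⟨⟨τmax, hSmax⟩, ⟨τmin, hSmin⟩, fun ε hε => ?_⟩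
  have hε' : (0:ℝ) ≤ (ε:ℝ) := by exact_mod_cast hε
  constructor
  · rintro ⟨σ, hσ⟩
    obtain ⟨ha, hb⟩ := abs_le.mp hσ
    constructor
    · have h1 : (⨅ σ', f σ') ≤ f σ := ciInf_le hbddB σ
      have h2 : f σ - (q:ℝ) ≤ (ε:ℝ) := hb
      linarith
    · have h1 : f σ ≤ ⨆ σ', f σ' := le_ciSup hbddA σ
      linarith
  · rintro ⟨h1, h2⟩
    rw [← hSmin] at h1
    rw [← hSmax] at h2
    by_cases hql : (q:ℝ) ≤ f τmin
    · refine ⟨τmin, ?_⟩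
      rw [abs_le]
      have h3 : (⨅ σ', f σ') = f τmin := hSmin.symm
      constructor
      · show -(ε:ℝ) ≤ f τmin - (q:ℝ)
        linarith
      · show f τmin - (q:ℝ) ≤ (ε:ℝ)
        linarith
    · push_neg at hql
      by_cases hqu : f τmax ≤ (q:ℝ)
      · refine ⟨τmax, ?_⟩
        rw [abs_le]
        constructor
        · show -(ε:ℝ) ≤ f τmax - (q:ℝ)
          linarith
        · show f τmax - (q:ℝ) ≤ (ε:ℝ)
          linarith
      · push_neg at hqu
        have hLU : f τmin < f τmax := lt_trans hql hqu
        set r : ℝ := ((q:ℝ) - f τmin) / (f τmax - f τmin) with hr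
        have hr0 : 0 ≤ r := div_nonneg (by linarith) (by linarith)
        have hr1 : r ≤ 1 := by
          rw [hr, div_le_one (by linarith)]
          linarith
        refine ⟨fun j => RelAux.mixSched (τmin j) (τmax j) hr0 hr1, ?_⟩
        have hmixf : f (fun j => RelAux.mixSched (τmin j) (τmax j) hr0 hr1)
            = (1 - r) * f τmin + r * f τmax := by
          show (∑ i : Fin m, (qc i : ℝ) * reachProb M
              (RelAux.mixSched (τmin (k i)) (τmax (k i)) hr0 hr1) (st i) (T i))
            = (1 - r) * (∑ i : Fin m, (qc i : ℝ) * reachProb M (τmin (k i)) (st i) (T i))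
              + r * (∑ i : Fin m, (qc i : ℝ) * reachProb M (τmax (k i)) (st i) (T i))
          calc ∑ i : Fin m, (qc i : ℝ) * reachProb M
                (RelAux.mixSched (τmin (k i)) (τmax (k i)) hr0 hr1) (st i) (T i)
              = ∑ i : Fin m, ((1 - r) * ((qc i : ℝ) * reachProb M (τmin (k i)) (st i) (T i))
                + r * ((qc i : ℝ) * reachProb M (τmax (k i)) (st i) (T i))) := by
                refine Finset.sum_congr rfl fun i _ => ?_
                rw [RelAux.mix_reachProb]
                ring
            _ = _ := by
                rw [Finset.sum_add_distrib, ← Finset.mul_sum, ← Finset.mul_sum]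
        have hq : (1 - r) * f τmin + r * f τmax = (q:ℝ) := by
          have hcan : r * (f τmax - f τmin) = (q:ℝ) - f τmin := by
            rw [hr, div_mul_cancel₀]
            linarith
          nlinarith [hcan]
        show |f (fun j => RelAux.mixSched (τmin j) (τmax j) hr0 hr1) - (q:ℝ)| ≤ (ε:ℝ)
        rw [hmixf, hq]
        simpa using hε'
end
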